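/- arXiv:0912.0440 — 3 statements merged into one kernel-verified Lean document; each statement's English description precedes it below -/
import Mathlib

section
/- Consider the controlled planar piecewise affine system ẋ₁ = K₁·s⁻(x₂,θ₂¹) − (γ₁⁰ + γ₁¹·ū·s⁺(x₁,θ₁¹)·s⁻(x₂,θ₂¹))·x₁, ẋ₂ = K₂·[s⁺(x₁,θ₁¹)·s⁺(x₂,θ₂¹) + s⁺(x₁,θ₁²)·s⁻(x₂,θ₂¹)] − γ₂⁰·x₂, with parameters γ₁⁰, γ₂⁰ > 0, γ₁¹ > 0, 0 < θ₁¹ < θ₁², 0 < θ₂¹, K₁ > γ₁⁰·θ₁², K₂ > γ₂⁰·θ₂¹, and where the constant feedback value ū satisfies (K₁ − γ₁⁰·θ₁²)/(γ₁¹·θ₁²) < ū < (K₁ − γ₁⁰·θ₁¹)/(γ₁¹·θ₁¹). Then every solution x defined on [0,∞) with x(0) ∈ (0, K₁/γ₁⁰) × (0, K₂/γ₂⁰) converges as t → ∞ to the point (K₁/(γ₁⁰ + γ₁¹·ū), 0), which is thus a globally attractive equilibrium (the limit cycle of the uncontrolled system disappears under this qualitative feedback law). -/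
open MeasureTheory Filter Set Topology

/-- Gap extraction in a closed set. -/
lemma my_gap_extract {E : Set ℝ} (hcl : IsClosed E) {p q r₀ : ℝ}
    (hp : p ∈ E) (hq : q ∈ E) (hpr : p < r₀) (hrq : r₀ < q) (hr : r₀ ∉ E) :
    ∃ a b : ℝ, a ∈ E ∧ b ∈ E ∧ p ≤ a ∧ a < b ∧ b ≤ q ∧ ∀ y ∈ Ioo a b, y ∉ E := by
  set A := E ∩ Icc p r₀ with hA
  set B := E ∩ Icc r₀ q with hB
  have hAcl : IsClosed A := hcl.inter isClosed_Icc
  have hBcl : IsClosed B := hcl.inter isClosed_Icc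
  have hAne : A.Nonempty := ⟨p, hp, le_refl p, hpr.le⟩
  have hBne : B.Nonempty := ⟨q, hq, hrq.le, le_refl q⟩
  have hAbdd : BddAbove A := ⟨r₀, fun y hy => hy.2.2⟩
  have hBbdd : BddBelow B := ⟨r₀, fun y hy => hy.2.1⟩
  have haA : sSup A ∈ A := hAcl.csSup_mem hAne hAbdd
  have hbB : sInf B ∈ B := hBcl.csInf_mem hBne hBbdd
  refine ⟨sSup A, sInf B, haA.1, hbB.1, haA.2.1, ?_, hbB.2.2, ?_⟩
  · have h1 : sSup A ≤ r₀ := haA.2.2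
    have h2 : r₀ ≤ sInf B := hbB.2.1
    have h3 : sSup A ≠ r₀ := fun h => hr (h ▸ haA.1)
    have h4 : r₀ ≠ sInf B := fun h => hr (h ▸ hbB.1)
    exact lt_of_le_of_lt (lt_of_le_of_ne h1 h3).le (lt_of_le_of_ne h2 h4)
  · intro y hy hyE
    rcases le_or_gt y r₀ with h | h
    · have : y ∈ A := ⟨hyE, le_trans haA.2.1 hy.1.le, h⟩
      exact absurd (le_csSup hAbdd this) (not_le.2 hy.1)
    · have : y ∈ B := ⟨hyE, h.le, le_trans hy.2.le hbB.2.2⟩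
      exact absurd (csInf_le hBbdd this) (not_le.2 hy.2)

/-- MVT-type inequality with finitely many exceptional points. -/
lemma my_mvt_aux : ∀ (n : ℕ) (F : Finset ℝ), F.card ≤ n → ∀ (u g : ℝ → ℝ) (c d : ℝ), c ≤ d →
    ContinuousOn u (Icc c d) →
    (∀ t ∈ Ioo c d, t ∉ F → HasDerivAt u (g t) t) →
    (∀ t ∈ Ioo c d, t ∉ F → g t ≤ 0) → u d ≤ u c := by
  intro n
  induction n with
  | zero =>
    intro F hF u g c d hcd hcont hder hle
    have hFe : F = ∅ := Finset.card_eq_zero.mp (Nat.le_zero.mp hF)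
    subst hFe
    rcases eq_or_lt_of_le hcd with h | h
    · subst h; exact le_refl _
    · obtain ⟨ξ, hξ, hs⟩ := exists_hasDerivAt_eq_slope u g h hcont
        (fun t ht => hder t ht (by simp))
      have h1 : g ξ ≤ 0 := hle ξ hξ (by simp)
      rw [hs] at h1
      have hdc : 0 < d - c := sub_pos.2 h
      rcases div_nonpos_iff.mp h1 with ⟨h2, h3⟩ | ⟨h2, h3⟩
      · linarith
      · linarith
  | succ n ih =>
    intro F hF u g c d hcd hcont hder hle
    by_cases hex : ∃ t₀ ∈ F, t₀ ∈ Ioo c d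
    · obtain ⟨t₀, ht₀F, ht₀⟩ := hex
      have hcard : (F.erase t₀).card ≤ n := by
        have := Finset.card_erase_of_mem ht₀F
        omega
      have h1 : u t₀ ≤ u c := by
        refine ih (F.erase t₀) hcard u g c t₀ ht₀.1.le
          (hcont.mono (Icc_subset_Icc le_rfl ht₀.2.le)) ?_ ?_
        · intro t ht htE
          refine hder t ⟨ht.1, ht.2.trans ht₀.2⟩ fun hFt =>
            htE (Finset.mem_erase.2 ⟨ne_of_lt ht.2, hFt⟩)
        · intro t ht htE
          exact hle t ⟨ht.1, ht.2.trans ht₀.2⟩ fun hFt =>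
            htE (Finset.mem_erase.2 ⟨ne_of_lt ht.2, hFt⟩)
      have h2 : u d ≤ u t₀ := by
        refine ih (F.erase t₀) hcard u g t₀ d ht₀.2.le
          (hcont.mono (Icc_subset_Icc ht₀.1.le le_rfl)) ?_ ?_
        · intro t ht htE
          refine hder t ⟨ht₀.1.trans ht.1, ht.2⟩ fun hFt =>
            htE (Finset.mem_erase.2 ⟨(ne_of_lt ht.1).symm, hFt⟩)
        · intro t ht htE
          exact hle t ⟨ht₀.1.trans ht.1, ht.2⟩ fun hFt =>
            htE (Finset.mem_erase.2 ⟨(ne_of_lt ht.1).symm, hFt⟩)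
      exact h2.trans h1
    · refine ih ∅ (Nat.zero_le n) u g c d hcd hcont ?_ ?_
      · intro t ht _
        exact hder t ht fun hFt => hex ⟨t, hFt, ht⟩
      · intro t ht _
        exact hle t ht fun hFt => hex ⟨t, hFt, ht⟩

lemma my_mvt_le (F : Finset ℝ) (u g : ℝ → ℝ) {c d : ℝ} (hcd : c ≤ d)
    (hcont : ContinuousOn u (Icc c d))
    (hder : ∀ t ∈ Ioo c d, t ∉ F → HasDerivAt u (g t) t)
    (hle : ∀ t ∈ Ioo c d, t ∉ F → g t ≤ 0) : u d ≤ u c :=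
  my_mvt_aux F.card F le_rfl u g c d hcd hcont hder hle

lemma my_deriv_zero_eq (F : Finset ℝ) (u : ℝ → ℝ) {c d : ℝ} (hcd : c ≤ d)
    (hcont : ContinuousOn u (Icc c d))
    (hder : ∀ t ∈ Ioo c d, t ∉ F → HasDerivAt u 0 t) : u d = u c := by
  refine le_antisymm ?_ ?_
  · exact my_mvt_le F u (fun _ => 0) hcd hcont hder (fun t ht htF => le_refl 0)
  · have := my_mvt_le F (fun t => -u t) (fun _ => 0) hcd hcont.neg
      (fun t ht htF => by have h := (hder t ht htF).neg; rwa [neg_zero] at h) (fun t ht htF => le_refl 0)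
    change -u d ≤ -u c at this
    linarith

/-- Exact solution of the linear ODE `u' = A - L u` with finitely many exceptional points. -/
lemma my_lin_exact (F : Finset ℝ) {u : ℝ → ℝ} {A L c d : ℝ} (hL : L ≠ 0) (hcd : c ≤ d)
    (hcont : ContinuousOn u (Icc c d))
    (hder : ∀ t ∈ Ioo c d, t ∉ F → HasDerivAt u (A - L * u t) t) :
    u d = A / L + (u c - A / L) * Real.exp (-L * (d - c)) := by
  set v : ℝ → ℝ := fun t => (u t - A / L) * Real.exp (L * (t - c)) with hv
  have hvc : ContinuousOn v (Icc c d) := by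
    exact (hcont.sub continuousOn_const).mul
      ((Real.continuous_exp.comp (continuous_const.mul (continuous_id.sub continuous_const))).continuousOn)
  have hvd : ∀ t ∈ Ioo c d, t ∉ F → HasDerivAt v 0 t := by
    intro t ht htF
    have h1 : HasDerivAt (fun s => u s - A / L) (A - L * u t) t := (hder t ht htF).sub_const _
    have h2 : HasDerivAt (fun s : ℝ => L * (s - c)) L t := by
      simpa using ((hasDerivAt_id t).sub_const c).const_mul L
    have h3 : HasDerivAt (fun s : ℝ => Real.exp (L * (s - c))) (Real.exp (L * (t - c)) * L) t :=
      h2.exp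
    have h4 := h1.mul h3
    have hAL : A / L * L = A := div_mul_cancel₀ A hL
    have e : (A - L * u t) * Real.exp (L * (t - c)) + (u t - A / L) * (Real.exp (L * (t - c)) * L) = 0 := by
      linear_combination (-Real.exp (L * (t - c))) * hAL
    rw [e] at h4
    exact h4
  have h5 : v d = v c := my_deriv_zero_eq F v hcd hvc hvd
  have h6 : v c = u c - A / L := by simp [hv]
  rw [h6] at h5
  have h7 : Real.exp (L * (d - c)) > 0 := Real.exp_pos _
  have h8 : Real.exp (-L * (d - c)) * Real.exp (L * (d - c)) = 1 := by
    rw [← Real.exp_add]; ring_nf; exact Real.exp_zero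
  have h9 : (u d - A / L) * Real.exp (L * (d - c)) = u c - A / L := h5
  have hprod : Real.exp (L * (d - c)) * Real.exp (-L * (d - c)) = 1 := by
    rw [← Real.exp_add, show L * (d - c) + -L * (d - c) = 0 by ring, Real.exp_zero]
  have h10 : u d - A / L = (u c - A / L) * Real.exp (-L * (d - c)) := by
    calc u d - A / L = (u d - A / L) * (Real.exp (L * (d - c)) * Real.exp (-L * (d - c))) := by
          rw [hprod]; ring
      _ = ((u d - A / L) * Real.exp (L * (d - c))) * Real.exp (-L * (d - c)) := by ring
      _ = (u c - A / L) * Real.exp (-L * (d - c)) := by rw [h9]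
  linarith [h10]

/-- decay to zero -/
lemma my_decay (C L T : ℝ) (hL : 0 < L) :
    Tendsto (fun t : ℝ => C * Real.exp (-L * (t - T))) atTop (𝓝 0) := by
  have h0 : Tendsto (fun t : ℝ => t - T) atTop atTop :=
    (tendsto_atTop_add_const_right atTop (-T) tendsto_id).congr
      (fun x => (sub_eq_add_neg x T).symm)
  have h1 : Tendsto (fun t : ℝ => -L * (t - T)) atTop atBot :=
    h0.const_mul_atTop_of_neg (by linarith)
  have h2 : Tendsto (fun t : ℝ => Real.exp (-L * (t - T))) atTop (𝓝 0) :=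
    Real.tendsto_exp_atBot.comp h1
  simpa using h2.const_mul C


/-- Step function: `s⁺(x,θ) = 1` if `x > θ`, `0` if `x ≤ θ`. -/
noncomputable def sp (x θ : ℝ) : ℝ := if θ < x then 1 else 0

/-- Step function: `s⁻(x,θ) = 1 − s⁺(x,θ)`. -/
noncomputable def sm (x θ : ℝ) : ℝ := 1 - sp x θ

/-- `x` is a solution of `ẋ = f(x)` on the time set `S`. -/
def IsSolOn (f : ℝ × ℝ → ℝ × ℝ) (R : ℝ × ℝ → Prop) (x : ℝ → ℝ × ℝ) (S : Set ℝ) : Prop :=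
  ContinuousOn x S ∧
  volume {t | t ∈ S ∧ ¬ R (x t)} = 0 ∧
  ∀ t ∈ S, R (x t) → HasDerivWithinAt x (f (x t)) S t

set_option maxHeartbeats 4000000 in
/-- Under the qualitative feedback law `u = ū` on the boxes where `x₁ > θ₁¹` and
`x₂ < θ₂¹` (and `u = 0` elsewhere), with `ū` in the admissible interval, every
solution of the controlled system of Example 1 converges to the globally attractive
equilibrium `(K₁/(γ₁⁰+γ₁¹ū), 0)`: the limit cycle disappears. -/
theorem stmt1 (K₁ K₂ γ10 γ20 γ11 θ11 θ12 θ21 ubar : ℝ)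
    (hγ1 : 0 < γ10) (hγ2 : 0 < γ20) (hγ11 : 0 < γ11)
    (hθ11 : 0 < θ11) (hθ1 : θ11 < θ12) (hθ2 : 0 < θ21)
    (hK1 : γ10 * θ12 < K₁) (hK2 : γ20 * θ21 < K₂)
    (hu1 : (K₁ - γ10 * θ12) / (γ11 * θ12) < ubar)
    (hu2 : ubar < (K₁ - γ10 * θ11) / (γ11 * θ11))
    (f : ℝ × ℝ → ℝ × ℝ)
    (hf : ∀ p, f p =
      (K₁ * sm p.2 θ21 - (γ10 + γ11 * ubar * sp p.1 θ11 * sm p.2 θ21) * p.1,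
       K₂ * (sp p.1 θ11 * sp p.2 θ21 + sp p.1 θ12 * sm p.2 θ21) - γ20 * p.2))
    (R : ℝ × ℝ → Prop)
    (hR : ∀ p, R p ↔ (p.1 ≠ θ11 ∧ p.1 ≠ θ12 ∧ p.2 ≠ θ21)) :
    ∀ x : ℝ → ℝ × ℝ, IsSolOn f R x (Set.Ici 0) →
      x 0 ∈ Set.Ioo 0 (K₁ / γ10) ×ˢ Set.Ioo 0 (K₂ / γ20) →
      Tendsto x atTop (nhds (K₁ / (γ10 + γ11 * ubar), 0)) := by
  intro x hsol _hx0
  obtain ⟨hcont, hmeas, hderiv⟩ := hsol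
  set x1 : ℝ → ℝ := fun t => (x t).1 with hx1def
  set x2 : ℝ → ℝ := fun t => (x t).2 with hx2def
  set b : ℝ := γ10 + γ11 * ubar with hbdef
  set xs : ℝ := K₁ / b with hxsdef
  -- basic inequalities
  have hθ12pos : 0 < θ12 := hθ11.trans hθ1
  have hub : 0 < ubar := lt_trans (div_pos (by linarith) (by positivity)) hu1
  have hb : 0 < b := by rw [hbdef]; nlinarith [mul_pos hγ11 hub]
  have hu2' : ubar * (γ11 * θ11) < K₁ - γ10 * θ11 := by
    have := (lt_div_iff₀ (by positivity : (0:ℝ) < γ11 * θ11)).mp hu2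
    linarith
  have hu1' : K₁ - γ10 * θ12 < ubar * (γ11 * θ12) := by
    have := (div_lt_iff₀ (by positivity : (0:ℝ) < γ11 * θ12)).mp hu1
    linarith
  have hK1b : b * θ11 < K₁ := by rw [hbdef]; nlinarith
  have hK1b2 : K₁ < b * θ12 := by rw [hbdef]; nlinarith
  have hxs1 : θ11 < xs := by rw [hxsdef]; rw [lt_div_iff₀ hb]; nlinarith
  have hxs2 : xs < θ12 := by rw [hxsdef]; rw [div_lt_iff₀ hb]; nlinarith
  have hxspos : 0 < xs := hθ11.trans hxs1
  have hK2pos : 0 < K₂ := by nlinarith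
  have hθ21K : θ21 < K₂ / γ20 := by rw [lt_div_iff₀ hγ2]; nlinarith
  -- continuity of the components
  have hcont1 : ContinuousOn x1 (Set.Ici 0) := continuous_fst.comp_continuousOn hcont
  have hcont2 : ContinuousOn x2 (Set.Ici 0) := continuous_snd.comp_continuousOn hcont
  -- step function values
  have hsp1 : ∀ y θ : ℝ, θ < y → sp y θ = 1 := fun y θ h => if_pos h
  have hsp0 : ∀ y θ : ℝ, y ≤ θ → sp y θ = 0 := fun y θ h => if_neg (not_lt.2 h)
  -- values of the vector field
  have hf1_above : ∀ p : ℝ × ℝ, θ21 < p.2 → (f p).1 = -(γ10 * p.1) := by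
    intro p hp
    rw [hf p]
    simp only [sm, hsp1 _ _ hp]
    ring
  have hf1_below_lo : ∀ p : ℝ × ℝ, p.2 < θ21 → p.1 ≤ θ11 → (f p).1 = K₁ - γ10 * p.1 := by
    intro p hp2 hp1
    rw [hf p]
    simp only [sm, hsp0 _ _ hp2.le, hsp0 _ _ hp1]
    ring
  have hf1_below_hi : ∀ p : ℝ × ℝ, p.2 < θ21 → θ11 < p.1 → (f p).1 = K₁ - b * p.1 := by
    intro p hp2 hp1
    rw [hf p, hbdef]
    simp only [sm, hsp0 _ _ hp2.le, hsp1 _ _ hp1]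
    ring
  have hf2_below_lo : ∀ p : ℝ × ℝ, p.2 < θ21 → p.1 ≤ θ12 → (f p).2 = -(γ20 * p.2) := by
    intro p hp2 hp1
    rw [hf p]
    simp only [sm, hsp0 _ _ hp2.le, hsp0 _ _ hp1]
    ring
  have hf2_below_hi : ∀ p : ℝ × ℝ, p.2 < θ21 → θ12 < p.1 → (f p).2 = K₂ - γ20 * p.2 := by
    intro p hp2 hp1
    rw [hf p]
    simp only [sm, hsp0 _ _ hp2.le, hsp1 _ _ hp1]
    ring
  have hf2_above_lo : ∀ p : ℝ × ℝ, θ21 < p.2 → p.1 ≤ θ11 → (f p).2 = -(γ20 * p.2) := by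
    intro p hp2 hp1
    rw [hf p]
    simp only [sm, hsp1 _ _ hp2, hsp0 _ _ hp1]
    ring
  have hf2_above_hi : ∀ p : ℝ × ℝ, θ21 < p.2 → θ11 < p.1 → (f p).2 = K₂ - γ20 * p.2 := by
    intro p hp2 hp1
    rw [hf p]
    simp only [sm, hsp1 _ _ hp2, hsp1 _ _ hp1]
    ring
  -- regularity helpers
  have hreg : ∀ t : ℝ, x1 t ≠ θ11 → x1 t ≠ θ12 → x2 t ≠ θ21 → R (x t) :=
    fun t h1 h2 h3 => (hR (x t)).2 ⟨h1, h2, h3⟩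
  have hregn : ∀ t : ℝ, R (x t) → x1 t ≠ θ11 ∧ x1 t ≠ θ12 ∧ x2 t ≠ θ21 :=
    fun t h => (hR (x t)).1 h
  -- derivatives of components
  have hD : ∀ t : ℝ, 0 < t → R (x t) → HasDerivAt x (f (x t)) t := fun t ht hr =>
    (hderiv t ht.le hr).hasDerivAt (Ici_mem_nhds ht)
  have hD1 : ∀ t : ℝ, 0 < t → R (x t) → HasDerivAt x1 ((f (x t)).1) t := by
    intro t ht hr
    exact ((ContinuousLinearMap.fst ℝ ℝ ℝ).hasFDerivAt).comp_hasDerivAt t (hD t ht hr)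
  have hD2 : ∀ t : ℝ, 0 < t → R (x t) → HasDerivAt x2 ((f (x t)).2) t := by
    intro t ht hr
    exact ((ContinuousLinearMap.snd ℝ ℝ ℝ).hasFDerivAt).comp_hasDerivAt t (hD t ht hr)
  -- in any interval of positive length there is a regular point
  have hmz : ∀ p q : ℝ, 0 ≤ p → p < q → ∃ r, r ∈ Set.Ioo p q ∧ R (x r) := by
    intro p q hp hpq
    by_contra hcon
    push_neg at hcon
    have hsub : Set.Ioo p q ⊆ {t | t ∈ Set.Ici 0 ∧ ¬ R (x t)} := fun r hr =>
      ⟨le_trans hp hr.1.le, hcon r hr⟩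
    have h1 : volume (Set.Ioo p q) ≤ volume {t | t ∈ Set.Ici 0 ∧ ¬ R (x t)} :=
      measure_mono hsub
    rw [hmeas] at h1
    have h2 : volume (Set.Ioo p q) = 0 := le_antisymm h1 zero_le
    rw [Real.volume_Ioo] at h2
    rw [ENNReal.ofReal_eq_zero] at h2
    linarith
  -- sign constancy of x2 on wall-free intervals
  have hsame : ∀ a b : ℝ, 0 ≤ a → (∀ r ∈ Set.Ioo a b, x2 r ≠ θ21) →
      ∀ r1 ∈ Set.Ioo a b, ∀ r2 ∈ Set.Ioo a b, x2 r1 < θ21 → x2 r2 < θ21 := by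
    intro a b ha hne r1 hr1 r2 hr2 h1
    by_contra h2
    have h2' : θ21 < x2 r2 := lt_of_le_of_ne (not_lt.mp h2) (Ne.symm (hne r2 hr2))
    rcases le_total r1 r2 with h | h
    · have hsub : Set.Icc r1 r2 ⊆ Set.Ioo a b := fun y hy =>
        ⟨lt_of_lt_of_le hr1.1 hy.1, lt_of_le_of_lt hy.2 hr2.2⟩
      have hco : ContinuousOn x2 (Set.Icc r1 r2) :=
        hcont2.mono (fun y hy => le_trans ha (hsub hy).1.le)
      obtain ⟨ξ, hξ, hξv⟩ := intermediate_value_Icc h hco ⟨h1.le, h2'.le⟩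
      exact hne ξ (hsub hξ) hξv
    · have hsub : Set.Icc r2 r1 ⊆ Set.Ioo a b := fun y hy =>
        ⟨lt_of_lt_of_le hr2.1 hy.1, lt_of_le_of_lt hy.2 hr1.2⟩
      have hco : ContinuousOn x2 (Set.Icc r2 r1) :=
        hcont2.mono (fun y hy => le_trans ha (hsub hy).1.le)
      obtain ⟨ξ, hξ, hξv⟩ := intermediate_value_Icc' h hco ⟨h1.le, h2'.le⟩
      exact hne ξ (hsub hξ) hξv
  -- first crossing time
  have hfirst : ∀ (g : ℝ → ℝ) (c t0 t1 : ℝ), 0 ≤ t0 → t0 ≤ t1 → ContinuousOn g (Set.Ici 0) →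
      g t0 < c → c ≤ g t1 →
      ∃ σ, t0 < σ ∧ σ ≤ t1 ∧ g σ = c ∧ ∀ r, t0 ≤ r → r < σ → g r < c := by
    intro g c t0 t1 ht0 ht01 hg hg0 hg1
    have hgI : ContinuousOn g (Set.Icc t0 t1) := hg.mono (fun y hy => le_trans ht0 hy.1)
    set A := Set.Icc t0 t1 ∩ g ⁻¹' Set.Ici c with hA
    have hAcl : IsClosed A := hgI.preimage_isClosed_of_isClosed isClosed_Icc isClosed_Ici
    have hAne : A.Nonempty := ⟨t1, ⟨ht01, le_rfl⟩, hg1⟩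
    have hAbdd : BddBelow A := ⟨t0, fun y hy => hy.1.1⟩
    have hσA : sInf A ∈ A := hAcl.csInf_mem hAne hAbdd
    set σ := sInf A with hσ
    have hlt : ∀ r, t0 ≤ r → r < σ → g r < c := by
      intro r h1 h2
      by_contra hc
      exact absurd (csInf_le hAbdd ⟨⟨h1, le_trans h2.le hσA.1.2⟩, not_lt.mp hc⟩)
        (not_le.mpr h2)
    have ht0σ : t0 < σ :=
      lt_of_le_of_ne hσA.1.1 (fun h => absurd (h ▸ hσA.2) (not_le.2 hg0))
    have hgσ : g σ = c := by
      obtain ⟨ξ, hξ, hξv⟩ := intermediate_value_Icc (le_of_lt ht0σ)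
        (hgI.mono (Set.Icc_subset_Icc le_rfl hσA.1.2)) ⟨hg0.le, hσA.2⟩
      have hξA : ξ ∈ A := ⟨⟨hξ.1, le_trans hξ.2 hσA.1.2⟩, le_of_eq hξv.symm⟩
      have h1 : σ ≤ ξ := csInf_le hAbdd hξA
      have h2 : ξ = σ := le_antisymm hξ.2 h1
      rw [← h2]; exact hξv
    exact ⟨σ, ht0σ, hσA.1.2, hgσ, hlt⟩
  -- finiteness of wall touching times of x1 on intervals where x2 avoids its wall
  have wall_case : ∀ θw ρ : ℝ, 0 < ρ → (θw = θ11 ∨ θw = θ12) →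
      (∀ y : ℝ, |y - θw| < ρ → (y = θ11 ∨ y = θ12) → y = θw) →
      (∀ t : ℝ, 0 < t → R (x t) → |x1 t - θw| < ρ → (f (x t)).1 ≠ 0) →
      ∀ u v : ℝ, 0 ≤ u → (∀ r ∈ Set.Ioo u v, x2 r ≠ θ21) →
      {r : ℝ | r ∈ Set.Ioo u v ∧ x1 r = θw}.Finite := by
    intro θw ρ hρ hw hwall hfne u v hu hne
    by_contra hinf
    rw [← Set.not_infinite, not_not] at hinf
    set Z := {r : ℝ | r ∈ Set.Ioo u v ∧ x1 r = θw} with hZ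
    have huv : u < v := by
      by_contra hc
      have : Z = ∅ := by
        ext r; simp only [hZ, Set.mem_setOf_eq, Set.mem_empty_iff_false, iff_false]
        intro hr; exact hc (hr.1.1.trans hr.1.2)
      rw [this] at hinf; exact hinf (Set.finite_empty)
    set a : ℕ → ℝ := fun n => ((hinf.natEmbedding) n : ℝ) with ha
    have haZ : ∀ n, a n ∈ Z := fun n => ((hinf.natEmbedding) n).2
    have hainj : Function.Injective a :=
      fun m n h => (hinf.natEmbedding).injective (Subtype.val_injective h)
    obtain ⟨τ, hτ, φ, hφ, hconv⟩ := (isCompact_Icc : IsCompact (Set.Icc u v)).tendsto_subseq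
      (fun n => Set.Ioo_subset_Icc_self (haZ n).1)
    have hτ0 : τ ∈ Set.Ici (0:ℝ) := le_trans hu hτ.1
    have hcw : ContinuousWithinAt x1 (Set.Ici 0) τ := hcont1 τ hτ0
    have htd2 : Tendsto (a ∘ φ) atTop (nhdsWithin τ (Set.Ici 0)) :=
      tendsto_nhdsWithin_of_tendsto_nhds_of_eventually_within _ hconv
        (Eventually.of_forall fun n => le_trans hu (haZ (φ n)).1.1.le)
    have hx1τ : x1 τ = θw := by
      have h1 : Tendsto (fun n => x1 (a (φ n))) atTop (nhds (x1 τ)) := hcw.tendsto.comp htd2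
      have h2 : Tendsto (fun n => x1 (a (φ n))) atTop (nhds θw) := by
        refine (tendsto_congr (fun n => ?_)).mpr (tendsto_const_nhds)
        exact (haZ (φ n)).2
      exact tendsto_nhds_unique h1 h2
    obtain ⟨δ, hδ, hband⟩ := Metric.continuousWithinAt_iff.mp hcw ρ hρ
    obtain ⟨N, hN⟩ := Metric.tendsto_atTop.mp hconv (δ/2) (by positivity)
    have hp12 : a (φ N) ≠ a (φ (N+1)) := by
      intro h
      have := hainj h
      have := hφ.injective this
      omega
    obtain ⟨s, t, hst, hsZ, htZ, hsd, htd⟩ :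
        ∃ s t : ℝ, s < t ∧ s ∈ Z ∧ t ∈ Z ∧ dist s τ < δ ∧ dist t τ < δ := by
      have d1 : dist (a (φ N)) τ < δ := lt_of_lt_of_le (hN N le_rfl) (by linarith)
      have d2 : dist (a (φ (N+1))) τ < δ :=
        lt_of_lt_of_le (hN (N+1) (by omega)) (by linarith)
      rcases lt_or_gt_of_ne hp12 with h | h
      · exact ⟨a (φ N), a (φ (N+1)), h, haZ _, haZ _, d1, d2⟩
      · exact ⟨a (φ (N+1)), a (φ N), h, haZ _, haZ _, d2, d1⟩
    have hIccsub : Set.Icc s t ⊆ Set.Ioo u v := fun r hr =>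
      ⟨lt_of_lt_of_le hsZ.1.1 hr.1, lt_of_le_of_lt hr.2 htZ.1.2⟩
    have hIcc0 : Set.Icc s t ⊆ Set.Ici (0:ℝ) := fun r hr => le_trans hu (hIccsub hr).1.le
    have hbd : ∀ r ∈ Set.Icc s t, |x1 r - θw| < ρ := by
      intro r hr
      have hrd : dist r τ < δ := by
        rw [Real.dist_eq] at hsd htd ⊢
        rcases abs_lt.mp hsd with ⟨e1, e2⟩
        rcases abs_lt.mp htd with ⟨e3, e4⟩
        rw [abs_lt]
        constructor <;> [linarith [hr.1]; linarith [hr.2]]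
      have := hband (hIcc0 hr) hrd
      rw [Real.dist_eq, hx1τ] at this
      exact this
    set W := Set.Icc s t ∩ x1 ⁻¹' {θw} with hW
    have hWcl : IsClosed W :=
      (hcont1.mono hIcc0).preimage_isClosed_of_isClosed isClosed_Icc isClosed_singleton
    obtain ⟨r₀, hr₀I, hr₀R⟩ := hmz s t (hIcc0 (Set.left_mem_Icc.2 hst.le)) hst
    have hx1r₀ : x1 r₀ ≠ θw := by
      rcases hw with h | h
      · rw [h]; exact (hregn r₀ hr₀R).1
      · rw [h]; exact (hregn r₀ hr₀R).2.1
    have hr₀W : r₀ ∉ W := fun h => hx1r₀ h.2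
    have hsW : s ∈ W := ⟨Set.left_mem_Icc.2 hst.le, hsZ.2⟩
    have htW : t ∈ W := ⟨Set.right_mem_Icc.2 hst.le, htZ.2⟩
    obtain ⟨a', b', haW, hbW, hsa, hab', hbt, hgap⟩ :=
      my_gap_extract hWcl hsW htW hr₀I.1 hr₀I.2 hr₀W
    have hab'Icc : Set.Icc a' b' ⊆ Set.Icc s t := fun r hr =>
      ⟨le_trans hsa hr.1, le_trans hr.2 hbt⟩
    have hRall : ∀ r ∈ Set.Ioo a' b', R (x r) := by
      intro r hr
      have hrIcc : r ∈ Set.Icc s t := hab'Icc (Set.Ioo_subset_Icc_self hr)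
      have hx1ne : x1 r ≠ θw := fun h => hgap r hr ⟨hrIcc, h⟩
      refine hreg r ?_ ?_ (hne r (hIccsub hrIcc))
      · intro h; exact hx1ne (hwall _ (hbd r hrIcc) (Or.inl h))
      · intro h; exact hx1ne (hwall _ (hbd r hrIcc) (Or.inr h))
    have hder : ∀ r ∈ Set.Ioo a' b', HasDerivAt x1 ((f (x r)).1) r := by
      intro r hr
      have h0 : (0:ℝ) < r := by
        have := (hIccsub ⟨le_trans hsa hr.1.le, le_trans hr.2.le hbt⟩).1
        linarith [hu]
      exact hD1 r h0 (hRall r hr)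
    have hcontab : ContinuousOn x1 (Set.Icc a' b') :=
      hcont1.mono (fun r hr => hIcc0 (hab'Icc hr))
    have hends : x1 a' = x1 b' := by
      have h1 : x1 a' = θw := haW.2
      have h2 : x1 b' = θw := hbW.2
      rw [h1, h2]
    obtain ⟨ξ, hξ, h0⟩ := exists_hasDerivAt_eq_zero hab' hcontab hends hder
    have hξ0 : (0:ℝ) < ξ := by
      have := (hIccsub ⟨le_trans hsa hξ.1.le, le_trans hξ.2.le hbt⟩).1
      linarith [hu]
    exact hfne ξ hξ0 (hRall ξ hξ)
      (hbd ξ (hab'Icc (Set.Ioo_subset_Icc_self hξ))) h0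
  -- band radii
  obtain ⟨ρ1, hρ1, hρ1a, hρ1b, hρ1c⟩ :
      ∃ ρ1 : ℝ, 0 < ρ1 ∧ ρ1 ≤ θ11 ∧ ρ1 ≤ xs - θ11 ∧ ρ1 ≤ θ12 - θ11 :=
    ⟨min (min θ11 (xs - θ11)) (θ12 - θ11),
      lt_min (lt_min hθ11 (by linarith)) (by linarith),
      le_trans (min_le_left _ _) (min_le_left _ _),
      le_trans (min_le_left _ _) (min_le_right _ _), min_le_right _ _⟩
  obtain ⟨ρ2, hρ2, hρ2a, hρ2b⟩ :
      ∃ ρ2 : ℝ, 0 < ρ2 ∧ ρ2 ≤ θ12 - xs ∧ ρ2 ≤ θ12 - θ11 :=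
    ⟨min (θ12 - xs) (θ12 - θ11), lt_min (by linarith) (by linarith),
      min_le_left _ _, min_le_right _ _⟩
  have hwall1 : ∀ y : ℝ, |y - θ11| < ρ1 → (y = θ11 ∨ y = θ12) → y = θ11 := by
    intro y hy h
    rcases h with h | h
    · exact h
    · exfalso; rw [h] at hy
      rw [abs_of_pos (by linarith)] at hy
      linarith
  have hwall2 : ∀ y : ℝ, |y - θ12| < ρ2 → (y = θ11 ∨ y = θ12) → y = θ12 := by
    intro y hy h
    rcases h with h | h
    · exfalso; rw [h] at hy
      rw [abs_of_neg (by linarith)] at hy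
      linarith
    · exact h
  have hbxs : b * xs = K₁ := by
    rw [hxsdef]
    field_simp
  have hfne1 : ∀ t : ℝ, 0 < t → R (x t) → |x1 t - θ11| < ρ1 → (f (x t)).1 ≠ 0 := by
    intro t _ hRt hb1
    rcases abs_lt.mp hb1 with ⟨e1, e2⟩
    rcases lt_or_gt_of_ne (hregn t hRt).2.2 with h2 | h2
    · rcases le_or_gt (x1 t) θ11 with h1 | h1
      · rw [hf1_below_lo _ h2 h1]
        have hm : γ10 * x1 t ≤ γ10 * θ11 := mul_le_mul_of_nonneg_left h1 hγ1.le
        have hm2 : γ10 * θ11 < γ10 * θ12 := mul_lt_mul_of_pos_left hθ1 hγ1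
        exact ne_of_gt (by linarith)
      · rw [hf1_below_hi _ h2 h1]
        have hxl : x1 t < xs := by linarith
        have hm : b * x1 t < b * xs := mul_lt_mul_of_pos_left hxl hb
        exact ne_of_gt (by linarith)
    · rw [hf1_above _ h2]
      have h0 : 0 < x1 t := by linarith
      have hm : 0 < γ10 * x1 t := mul_pos hγ1 h0
      exact ne_of_lt (by linarith)
  have hfne2 : ∀ t : ℝ, 0 < t → R (x t) → |x1 t - θ12| < ρ2 → (f (x t)).1 ≠ 0 := by
    intro t _ hRt hb2
    rcases abs_lt.mp hb2 with ⟨e1, e2⟩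
    have h11 : θ11 < x1 t := by linarith
    rcases lt_or_gt_of_ne (hregn t hRt).2.2 with h2 | h2
    · rw [hf1_below_hi _ h2 h11]
      have hxg : xs < x1 t := by linarith
      have hm : b * xs < b * x1 t := mul_lt_mul_of_pos_left hxg hb
      exact ne_of_lt (by linarith)
    · rw [hf1_above _ h2]
      have h0 : 0 < x1 t := by linarith
      have hm : 0 < γ10 * x1 t := mul_pos hγ1 h0
      exact ne_of_lt (by linarith)
  -- the main finiteness lemma
  have M2 : ∀ u v : ℝ, 0 ≤ u → (∀ r ∈ Set.Ioo u v, x2 r ≠ θ21) →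
      {r : ℝ | r ∈ Set.Ioo u v ∧ (x1 r = θ11 ∨ x1 r = θ12)}.Finite := by
    intro u v hu hne
    have h1 := wall_case θ11 ρ1 hρ1 (Or.inl rfl) hwall1 hfne1 u v hu hne
    have h2 := wall_case θ12 ρ2 hρ2 (Or.inr rfl) hwall2 hfne2 u v hu hne
    refine (h1.union h2).subset ?_
    intro r hr
    rcases hr.2 with h | h
    · exact Or.inl ⟨hr.1, h⟩
    · exact Or.inr ⟨hr.1, h⟩
  -- exact solutions of the linear ODEs satisfied by the coordinates
  have ode2 : ∀ (A u v : ℝ), 0 ≤ u → u ≤ v →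
      (∀ r ∈ Set.Ioo u v, x2 r ≠ θ21) →
      (∀ r ∈ Set.Ioo u v, R (x r) → (f (x r)).2 = A - γ20 * x2 r) →
      x2 v = A / γ20 + (x2 u - A / γ20) * Real.exp (-γ20 * (v - u)) := by
    intro A u v hu huv hne hval
    have hfin := M2 u v hu hne
    refine my_lin_exact hfin.toFinset (ne_of_gt hγ2) huv
      (hcont2.mono (fun r hr => le_trans hu hr.1)) ?_
    intro t ht htF
    have htw : ¬ (x1 t = θ11 ∨ x1 t = θ12) := by
      intro hc
      exact htF (hfin.mem_toFinset.mpr ⟨ht, hc⟩)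
    push_neg at htw
    have hRt : R (x t) := hreg t htw.1 htw.2 (hne t ht)
    have hd := hD2 t (lt_of_le_of_lt hu ht.1) hRt
    rw [hval t ht hRt] at hd
    exact hd
  have ode1 : ∀ (A L u v : ℝ), 0 < L → 0 ≤ u → u ≤ v →
      (∀ r ∈ Set.Ioo u v, x2 r ≠ θ21) →
      (∀ r ∈ Set.Ioo u v, R (x r) → (f (x r)).1 = A - L * x1 r) →
      x1 v = A / L + (x1 u - A / L) * Real.exp (-L * (v - u)) := by
    intro A L u v hL hu huv hne hval
    have hfin := M2 u v hu hne
    refine my_lin_exact hfin.toFinset (ne_of_gt hL) huv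
      (hcont1.mono (fun r hr => le_trans hu hr.1)) ?_
    intro t ht htF
    have htw : ¬ (x1 t = θ11 ∨ x1 t = θ12) := by
      intro hc
      exact htF (hfin.mem_toFinset.mpr ⟨ht, hc⟩)
    push_neg at htw
    have hRt : R (x t) := hreg t htw.1 htw.2 (hne t ht)
    have hd := hD1 t (lt_of_le_of_lt hu ht.1) hRt
    rw [hval t ht hRt] at hd
    exact hd
  -- closedness of the x2-wall time set
  have hE2cl : IsClosed (Set.Ici (0:ℝ) ∩ x2 ⁻¹' {θ21}) :=
    hcont2.preimage_isClosed_of_isClosed isClosed_Ici isClosed_singleton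
  -- the basic algebraic contradiction for closed wall-to-wall excursions
  have hfix : ∀ C E : ℝ, 0 < E → E < 1 → C ≠ θ21 → θ21 = C + (θ21 - C) * E → False := by
    intro C E hE0 hE1 hCne heq
    rcases lt_or_gt_of_ne hCne with h | h
    · have h2 := mul_lt_mul_of_pos_left hE1 (by linarith : 0 < θ21 - C)
      rw [mul_one] at h2
      linarith
    · have h2 := mul_lt_mul_of_neg_left hE1 (by linarith : θ21 - C < 0)
      rw [mul_one] at h2
      linarith
  -- Step P2 : at some nonnegative time, x1 < θ12
  have P2 : ∃ T, 0 ≤ T ∧ x1 T < θ12 := by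
    by_contra hcon
    push_neg at hcon
    have hgapkill : ∀ p q : ℝ, 0 ≤ p → x2 p = θ21 → 0 ≤ q → x2 q = θ21 → p < q → False := by
      intro p q hp hxp hq hxq hpq
      obtain ⟨r₀, hr₀I, hr₀R⟩ := hmz p q hp hpq
      have hr₀E : r₀ ∉ Set.Ici (0:ℝ) ∩ x2 ⁻¹' {θ21} := fun h => (hregn r₀ hr₀R).2.2 h.2
      obtain ⟨aa, bb, haE, hbE, hpa, hab, hbq, hgap⟩ :=
        my_gap_extract hE2cl ⟨hp, hxp⟩ ⟨hq, hxq⟩ hr₀I.1 hr₀I.2 hr₀E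
      have ha0 : (0:ℝ) ≤ aa := haE.1
      have hne2 : ∀ r ∈ Set.Ioo aa bb, x2 r ≠ θ21 := fun r hr h =>
        hgap r hr ⟨le_trans ha0 hr.1.le, h⟩
      have hval : ∀ r ∈ Set.Ioo aa bb, R (x r) → (f (x r)).2 = K₂ - γ20 * x2 r := by
        intro r hr hRr
        have h12 : θ12 < x1 r :=
          lt_of_le_of_ne (hcon r (le_trans ha0 hr.1.le)) (Ne.symm (hregn r hRr).2.1)
        rcases lt_or_gt_of_ne (hregn r hRr).2.2 with h | h
        · exact hf2_below_hi _ h h12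
        · exact hf2_above_hi _ h (lt_trans hθ1 h12)
      have heq := ode2 K₂ aa bb ha0 hab.le hne2 hval
      have hxaa : x2 aa = θ21 := haE.2
      have hxbb : x2 bb = θ21 := hbE.2
      rw [hxaa, hxbb] at heq
      have hE1 : Real.exp (-γ20*(bb-aa)) < 1 := by
        rw [← Real.exp_zero]
        refine Real.exp_lt_exp.mpr ?_
        have := mul_pos hγ2 (sub_pos.2 hab)
        linarith
      exact hfix (K₂/γ20) _ (Real.exp_pos _) hE1 (ne_of_gt hθ21K) heq
    obtain ⟨T, hT0, hTprop⟩ : ∃ T, 0 ≤ T ∧ ∀ t, T < t → x2 t ≠ θ21 := by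
      by_cases hE : ∃ p, 0 ≤ p ∧ x2 p = θ21
      · obtain ⟨p, hp0, hpx⟩ := hE
        exact ⟨p, hp0, fun t ht hc => hgapkill p t hp0 hpx (le_trans hp0 ht.le) hc ht⟩
      · push_neg at hE
        exact ⟨0, le_rfl, fun t ht hc => hE t ht.le hc⟩
    have hS0 : (0:ℝ) ≤ T + 1 := by linarith
    have hSne : x2 (T+1) ≠ θ21 := hTprop (T+1) (by linarith)
    have hlater : ∀ r, T + 1 ≤ r → x2 r ≠ θ21 := fun r hr => hTprop r (by linarith)
    rcases lt_or_gt_of_ne hSne with hlt | hgt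
    · have hsgn : ∀ r, T + 1 ≤ r → x2 r < θ21 := by
        intro r hr
        exact hsame T (r+1) hT0 (fun y hy => hTprop y hy.1) (T+1)
          ⟨by linarith, by linarith⟩ r ⟨by linarith, by linarith⟩ hlt
      have hform : ∀ t, T + 1 ≤ t → x1 t = xs + (x1 (T+1) - xs) * Real.exp (-b*(t - (T+1))) := by
        intro t ht
        have hval : ∀ r ∈ Set.Ioo (T+1) t, R (x r) → (f (x r)).1 = K₁ - b * x1 r := by
          intro r hr hRr
          have h12 : θ12 < x1 r :=
            lt_of_le_of_ne (hcon r (by linarith [hr.1])) (Ne.symm (hregn r hRr).2.1)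
          exact hf1_below_hi _ (hsgn r hr.1.le) (lt_trans hθ1 h12)
        have h := ode1 K₁ b (T+1) t hb hS0 ht (fun r hr => hlater r hr.1.le) hval
        rw [h, hxsdef]
      have htend : Tendsto (fun t => xs + (x1 (T+1) - xs) * Real.exp (-b*(t - (T+1))))
          atTop (nhds xs) := by
        have := (my_decay (x1 (T+1) - xs) b (T+1) hb).const_add xs
        simpa using this
      have hev := htend.eventually_lt_const hxs2
      obtain ⟨t', ht'1, ht'2⟩ := (hev.and (eventually_ge_atTop (T+1))).exists
      have : x1 t' < θ12 := by rw [hform t' ht'2]; exact ht'1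
      exact absurd this (not_lt.2 (hcon t' (by linarith)))
    · have hsgn : ∀ r, T + 1 ≤ r → θ21 < x2 r := by
        intro r hr
        rcases lt_or_gt_of_ne (hlater r hr) with h | h
        · exact absurd (hsame T (r+1) hT0 (fun y hy => hTprop y hy.1) r
            ⟨by linarith, by linarith⟩ (T+1) ⟨by linarith, by linarith⟩ h) (not_lt.2 hgt.le)
        · exact h
      have hform : ∀ t, T + 1 ≤ t → x1 t = x1 (T+1) * Real.exp (-γ10*(t - (T+1))) := by
        intro t ht
        have hval : ∀ r ∈ Set.Ioo (T+1) t, R (x r) → (f (x r)).1 = 0 - γ10 * x1 r := by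
          intro r hr _
          rw [hf1_above _ (hsgn r hr.1.le)]
          ring
        have h := ode1 0 γ10 (T+1) t hγ1 hS0 ht (fun r hr => hlater r hr.1.le) hval
        rw [h]
        ring_nf
      have htend : Tendsto (fun t => x1 (T+1) * Real.exp (-γ10*(t - (T+1))))
          atTop (nhds 0) := my_decay _ _ _ hγ1
      have hev := htend.eventually_lt_const hθ12pos
      obtain ⟨t', ht'1, ht'2⟩ := (hev.and (eventually_ge_atTop (T+1))).exists
      have : x1 t' < θ12 := by rw [hform t' ht'2]; exact ht'1
      exact absurd this (not_lt.2 (hcon t' (by linarith)))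
  -- Step B1 : the region x1 < θ12 is forward invariant
  have B1 : ∀ t0 t : ℝ, 0 ≤ t0 → x1 t0 < θ12 → t0 ≤ t → x1 t < θ12 := by
    intro t0 t ht0 h0 ht
    by_contra hge
    push_neg at hge
    obtain ⟨σ, hσ1, hσ2, hσv, hσbefore⟩ := hfirst x1 θ12 t0 t ht0 ht hcont1 h0 hge
    obtain ⟨c, hc1, hc2, hc3⟩ : ∃ c, xs < c ∧ c < θ12 ∧ x1 t0 ≤ c :=
      ⟨max ((xs + θ12)/2) (x1 t0), lt_of_lt_of_le (by linarith) (le_max_left _ _),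
        max_lt (by linarith) h0, le_max_right _ _⟩
    have hc4 : θ11 < c := lt_trans hxs1 hc1
    have hc0 : 0 < c := lt_trans hxspos hc1
    have hBcl : IsClosed (Set.Icc t0 σ ∩ x1 ⁻¹' Set.Iic c) :=
      (hcont1.mono (fun y hy => le_trans ht0 hy.1)).preimage_isClosed_of_isClosed
        isClosed_Icc isClosed_Iic
    have hBne : (Set.Icc t0 σ ∩ x1 ⁻¹' Set.Iic c).Nonempty := ⟨t0, ⟨le_rfl, hσ1.le⟩, hc3⟩
    have hBbdd : BddAbove (Set.Icc t0 σ ∩ x1 ⁻¹' Set.Iic c) := ⟨σ, fun y hy => hy.1.2⟩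
    have hτB : sSup (Set.Icc t0 σ ∩ x1 ⁻¹' Set.Iic c) ∈ Set.Icc t0 σ ∩ x1 ⁻¹' Set.Iic c :=
      hBcl.csSup_mem hBne hBbdd
    set τ := sSup (Set.Icc t0 σ ∩ x1 ⁻¹' Set.Iic c) with hτdef
    have hτc : x1 τ ≤ c := hτB.2
    have hτσ : τ < σ := lt_of_le_of_ne hτB.1.2 (fun h => by
      have h2 : x1 σ ≤ c := h ▸ hτc
      rw [hσv] at h2; linarith)
    have hτ0 : 0 ≤ τ := le_trans ht0 hτB.1.1
    have hmid : ∀ r, τ < r → r ≤ σ → c < x1 r := by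
      intro r h1 h2
      by_contra hcc
      push_neg at hcc
      exact absurd (le_csSup hBbdd ⟨⟨le_trans hτB.1.1 h1.le, h2⟩, hcc⟩) (not_le.2 h1)
    have hmid2 : ∀ r, τ < r → r < σ → x1 r < θ12 := fun r h1 h2 =>
      hσbefore r (le_trans hτB.1.1 h1.le) h2
    have hkill : ∀ r1 r2 : ℝ, r1 ∈ Set.Ioo τ σ → r2 ∈ Set.Ioo τ σ →
        x2 r1 = θ21 → x2 r2 = θ21 → r1 < r2 → False := by
      intro r1 r2 hr1 hr2 hx1e hx2e h12
      obtain ⟨r₀, hr₀I, hr₀R⟩ := hmz r1 r2 (le_trans hτ0 hr1.1.le) h12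
      have hr₀E : r₀ ∉ Set.Ici (0:ℝ) ∩ x2 ⁻¹' {θ21} := fun h => (hregn r₀ hr₀R).2.2 h.2
      obtain ⟨aa, bb, haE, hbE, hpa, habb, hbq, hgap⟩ :=
        my_gap_extract hE2cl ⟨le_trans hτ0 hr1.1.le, hx1e⟩
          ⟨le_trans hτ0 hr2.1.le, hx2e⟩ hr₀I.1 hr₀I.2 hr₀E
      have hsubIoo : Set.Ioo aa bb ⊆ Set.Ioo τ σ := fun y hy =>
        ⟨lt_trans hr1.1 (lt_of_le_of_lt hpa hy.1), lt_trans (lt_of_lt_of_le hy.2 hbq) hr2.2⟩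
      have ha0 : (0:ℝ) ≤ aa := haE.1
      have hne2 : ∀ r ∈ Set.Ioo aa bb, x2 r ≠ θ21 := fun r hr h =>
        hgap r hr ⟨le_trans ha0 hr.1.le, h⟩
      obtain ⟨rs, hrsI, hrsR⟩ := hmz aa bb ha0 habb
      have hxaa : x2 aa = θ21 := haE.2
      have hxbb : x2 bb = θ21 := hbE.2
      have hreg1 : ∀ r ∈ Set.Ioo aa bb, θ11 < x1 r := fun r hr =>
        lt_trans hc4 (hmid r (hsubIoo hr).1 (hsubIoo hr).2.le)
      have hE1 : Real.exp (-γ20*(bb-aa)) < 1 := by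
        rw [← Real.exp_zero]
        refine Real.exp_lt_exp.mpr ?_
        have := mul_pos hγ2 (sub_pos.2 habb)
        linarith
      rcases lt_or_gt_of_ne (hregn rs hrsR).2.2 with hsgn' | hsgn'
      · have hall : ∀ r ∈ Set.Ioo aa bb, x2 r < θ21 := fun r hr =>
          hsame aa bb ha0 hne2 rs hrsI r hr hsgn'
        have heq := ode2 0 aa bb ha0 habb.le hne2 (fun r hr _ => by
          rw [hf2_below_lo _ (hall r hr) (le_of_lt (hmid2 r (hsubIoo hr).1 (hsubIoo hr).2))]
          ring)
        rw [hxaa, hxbb] at heq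
        refine hfix 0 (Real.exp (-γ20*(bb-aa))) (Real.exp_pos _) hE1 hθ2.ne ?_
        linear_combination heq
      · have hall : ∀ r ∈ Set.Ioo aa bb, θ21 < x2 r := by
          intro r hr
          rcases lt_or_gt_of_ne (hne2 r hr) with h | h
          · exact absurd (hsame aa bb ha0 hne2 r hr rs hrsI h) (not_lt.2 hsgn'.le)
          · exact h
        have heq := ode2 K₂ aa bb ha0 habb.le hne2 (fun r hr _ =>
          hf2_above_hi _ (hall r hr) (hreg1 r hr))
        rw [hxaa, hxbb] at heq
        exact hfix (K₂/γ20) _ (Real.exp_pos _) hE1 (ne_of_gt hθ21K) heq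
    have hExc : {r : ℝ | r ∈ Set.Ioo τ σ ∧ x2 r = θ21}.Subsingleton := by
      intro r1 hr1 r2 hr2
      by_contra h12
      rcases lt_or_gt_of_ne h12 with h | h
      · exact hkill r1 r2 hr1.1 hr2.1 hr1.2 hr2.2 h
      · exact hkill r2 r1 hr2.1 hr1.1 hr2.2 hr1.2 h
    have hFfin : {r : ℝ | r ∈ Set.Ioo τ σ ∧ x2 r = θ21}.Finite := hExc.finite
    have hder' : ∀ r ∈ Set.Ioo τ σ, r ∉ hFfin.toFinset → HasDerivAt x1 ((f (x r)).1) r := by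
      intro r hr hrF
      have hx2ne : x2 r ≠ θ21 := fun h => hrF (hFfin.mem_toFinset.mpr ⟨hr, h⟩)
      have hRr : R (x r) := hreg r (ne_of_gt (lt_trans hc4 (hmid r hr.1 hr.2.le)))
        (ne_of_lt (hmid2 r hr.1 hr.2)) hx2ne
      exact hD1 r (lt_of_le_of_lt hτ0 hr.1) hRr
    have hle' : ∀ r ∈ Set.Ioo τ σ, r ∉ hFfin.toFinset → (f (x r)).1 ≤ 0 := by
      intro r hr hrF
      have hx2ne : x2 r ≠ θ21 := fun h => hrF (hFfin.mem_toFinset.mpr ⟨hr, h⟩)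
      have hcx : c < x1 r := hmid r hr.1 hr.2.le
      rcases lt_or_gt_of_ne hx2ne with h | h
      · rw [hf1_below_hi _ h (lt_trans hc4 hcx)]
        have h1 := mul_lt_mul_of_pos_left hc1 hb
        have h2 := mul_lt_mul_of_pos_left hcx hb
        linarith [hbxs]
      · rw [hf1_above _ h]
        have : 0 < γ10 * x1 r := mul_pos hγ1 (lt_trans hc0 hcx)
        linarith
    have hms := my_mvt_le hFfin.toFinset x1 (fun r => (f (x r)).1) hτσ.le
      (hcont1.mono (fun y hy => le_trans hτ0 hy.1)) hder' hle'
    rw [hσv] at hms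
    linarith
  -- from now on, fix T₁ with x1 < θ12 for all later times
  obtain ⟨T₁, hT₁0, hT₁lt⟩ := P2
  have hx1lt : ∀ t, T₁ ≤ t → x1 t < θ12 := fun t ht => B1 T₁ t hT₁0 hT₁lt ht
  -- Step P3 : at some time after T₁, x2 < θ21
  have P3 : ∃ T2, T₁ ≤ T2 ∧ x2 T2 < θ21 := by
    by_contra hcon
    push_neg at hcon
    have hge : ∀ t, T₁ ≤ t → θ21 ≤ x2 t := hcon
    have alpha : ∀ s, T₁ ≤ s → (∀ r, s < r → x2 r ≠ θ21) → False := by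
      intro s hs hner
      have habove : ∀ r, s < r → θ21 < x2 r := fun r hr =>
        lt_of_le_of_ne (hge r (le_trans hs hr.le)) (Ne.symm (hner r hr))
      have hs1 : (0:ℝ) ≤ s + 1 := by linarith
      have hform : ∀ t, s + 1 ≤ t → x1 t = x1 (s+1) * Real.exp (-γ10*(t - (s+1))) := by
        intro t ht
        have h := ode1 0 γ10 (s+1) t hγ1 hs1 ht
          (fun r hr => hner r (by linarith [hr.1]))
          (fun r hr _ => by rw [hf1_above _ (habove r (by linarith [hr.1]))]; ring)
        rw [h]; ring_nf
      obtain ⟨t5, ht5a, ht5b⟩ :=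
        (((my_decay |x1 (s+1)| γ10 (s+1) hγ1).eventually_lt_const hθ11).and
          (eventually_ge_atTop (s+1))).exists
      have hlt : ∀ t, t5 ≤ t → x1 t < θ11 := by
        intro t ht
        rw [hform t (le_trans ht5b ht)]
        calc x1 (s+1) * Real.exp (-γ10*(t-(s+1)))
            ≤ |x1 (s+1)| * Real.exp (-γ10*(t-(s+1))) :=
              mul_le_mul_of_nonneg_right (le_abs_self _) (Real.exp_pos _).le
          _ ≤ |x1 (s+1)| * Real.exp (-γ10*(t5-(s+1))) := by
              refine mul_le_mul_of_nonneg_left (Real.exp_le_exp.2 ?_) (abs_nonneg _)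
              have := mul_le_mul_of_nonneg_left (sub_le_sub_right ht (s+1)) hγ1.le
              linarith
          _ < θ11 := ht5a
      have ht50 : (0:ℝ) ≤ t5 + 1 := by linarith
      have hform2 : ∀ t, t5 + 1 ≤ t → x2 t = x2 (t5+1) * Real.exp (-γ20*(t - (t5+1))) := by
        intro t ht
        have h := ode2 0 (t5+1) t ht50 ht
          (fun r hr => hner r (by linarith [hr.1]))
          (fun r hr _ => by
            rw [hf2_above_lo _ (habove r (by linarith [hr.1]))
              (le_of_lt (hlt r (by linarith [hr.1])))]
            ring)
        rw [h]; ring_nf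
      obtain ⟨t6, ht6a, ht6b⟩ :=
        (((my_decay (x2 (t5+1)) γ20 (t5+1) hγ2).eventually_lt_const hθ2).and
          (eventually_ge_atTop (t5+1))).exists
      have hlast : x2 t6 < θ21 := by rw [hform2 t6 ht6b]; exact ht6a
      exact absurd (habove t6 (by linarith)) (not_lt.2 hlast.le)
    have gapA : ∀ u v : ℝ, T₁ ≤ u → u < v → x2 u = θ21 → x2 v = θ21 →
        (∀ r ∈ Set.Ioo u v, θ21 < x2 r) → x1 u ≤ θ11 → False := by
      intro u v hu huv h2u h2v hmid hle
      have hu0 : (0:ℝ) ≤ u := le_trans hT₁0 hu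
      have hne : ∀ r ∈ Set.Ioo u v, x2 r ≠ θ21 := fun r hr => (hmid r hr).ne'
      have hform : ∀ r ∈ Set.Icc u v, x1 r = x1 u * Real.exp (-γ10*(r-u)) := by
        intro r hr
        have h := ode1 0 γ10 u r hγ1 hu0 hr.1
          (fun y hy => hne y ⟨hy.1, lt_of_lt_of_le hy.2 hr.2⟩)
          (fun y hy _ => by
            rw [hf1_above _ (hmid y ⟨hy.1, lt_of_lt_of_le hy.2 hr.2⟩)]; ring)
        rw [h]; ring_nf
      have hltw : ∀ r ∈ Set.Ioo u v, x1 r < θ11 := by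
        intro r hr
        rw [hform r (Set.Ioo_subset_Icc_self hr)]
        have hE1 : Real.exp (-γ10*(r-u)) < 1 := by
          rw [← Real.exp_zero]
          refine Real.exp_lt_exp.mpr ?_
          have := mul_pos hγ1 (sub_pos.2 hr.1)
          linarith
        have hE0 := Real.exp_pos (-γ10*(r-u))
        rcases le_or_gt (x1 u) 0 with hc | hc
        · have h1 : x1 u * Real.exp (-γ10*(r-u)) ≤ 0 := by
            have := mul_le_mul_of_nonneg_right hc hE0.le
            simpa using this
          linarith
        · have h1 : x1 u * Real.exp (-γ10*(r-u)) < x1 u := by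
            have := mul_lt_mul_of_pos_left hE1 hc
            simpa using this
          linarith
      have heq := ode2 0 u v hu0 huv.le hne (fun r hr _ => by
        rw [hf2_above_lo _ (hmid r hr) (hltw r hr).le]; ring)
      rw [h2u, h2v] at heq
      have hE1 : Real.exp (-γ20*(v-u)) < 1 := by
        rw [← Real.exp_zero]
        refine Real.exp_lt_exp.mpr ?_
        have := mul_pos hγ2 (sub_pos.2 huv)
        linarith
      refine hfix 0 (Real.exp (-γ20*(v-u))) (Real.exp_pos _) hE1 hθ2.ne ?_
      linear_combination heq
    have gapB : ∀ u v : ℝ, T₁ ≤ u → u < v → x2 u = θ21 → x2 v = θ21 →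
        (∀ r ∈ Set.Ioo u v, θ21 < x2 r) → x1 v < θ11 := by
      intro u v hu huv h2u h2v hmid
      rcases le_or_gt (x1 u) θ11 with hle | hgt
      · exact absurd (gapA u v hu huv h2u h2v hmid hle) id
      have hu0 : (0:ℝ) ≤ u := le_trans hT₁0 hu
      have hne : ∀ r ∈ Set.Ioo u v, x2 r ≠ θ21 := fun r hr => (hmid r hr).ne'
      have hx1u0 : 0 < x1 u := lt_trans hθ11 hgt
      have hform : ∀ r ∈ Set.Icc u v, x1 r = x1 u * Real.exp (-γ10*(r-u)) := by
        intro r hr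
        have h := ode1 0 γ10 u r hγ1 hu0 hr.1
          (fun y hy => hne y ⟨hy.1, lt_of_lt_of_le hy.2 hr.2⟩)
          (fun y hy _ => by
            rw [hf1_above _ (hmid y ⟨hy.1, lt_of_lt_of_le hy.2 hr.2⟩)]; ring)
        rw [h]; ring_nf
      have hlog : 0 < Real.log (x1 u / θ11) :=
        Real.log_pos (by rw [lt_div_iff₀ hθ11]; linarith)
      have htsu : u < u + Real.log (x1 u / θ11) / γ10 := by
        have : 0 < Real.log (x1 u / θ11) / γ10 := div_pos hlog hγ1
        linarith
      have hexpts : Real.exp (-γ10 * ((u + Real.log (x1 u / θ11) / γ10) - u)) = θ11 / x1 u := by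
        have h1 : -γ10 * ((u + Real.log (x1 u / θ11) / γ10) - u) = -Real.log (x1 u / θ11) := by
          field_simp
          ring
        rw [h1, Real.exp_neg, Real.exp_log (div_pos hx1u0 hθ11), inv_div]
      have hform2 : ∀ r ∈ Set.Icc u v,
          x1 r = θ11 * Real.exp (-γ10 * (r - (u + Real.log (x1 u / θ11) / γ10))) := by
        intro r hr
        rw [hform r hr]
        have h2 : -γ10 * (r - u) = -γ10 * (r - (u + Real.log (x1 u / θ11) / γ10))
            + -γ10 * ((u + Real.log (x1 u / θ11) / γ10) - u) := by ring
        rw [h2, Real.exp_add, hexpts]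
        field_simp
      rcases lt_or_ge (u + Real.log (x1 u / θ11) / γ10) v with hts | hts
      · have hfv := hform2 v (Set.right_mem_Icc.2 huv.le)
        rw [hfv]
        have hE1 : Real.exp (-γ10*(v - (u + Real.log (x1 u / θ11) / γ10))) < 1 := by
          rw [← Real.exp_zero]
          refine Real.exp_lt_exp.mpr ?_
          have := mul_pos hγ1 (sub_pos.2 hts)
          linarith
        have := mul_lt_mul_of_pos_left hE1 hθ11
        simpa using this
      · exfalso
        have hgt1 : ∀ r ∈ Set.Ioo u v, θ11 < x1 r := by
          intro r hr
          rw [hform2 r (Set.Ioo_subset_Icc_self hr)]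
          have hE1 : 1 < Real.exp (-γ10*(r - (u + Real.log (x1 u / θ11) / γ10))) := by
            rw [← Real.exp_zero]
            refine Real.exp_lt_exp.mpr ?_
            have hrv : r < u + Real.log (x1 u / θ11) / γ10 := lt_of_lt_of_le hr.2 hts
            have := mul_pos hγ1 (sub_pos.2 hrv)
            linarith
          have := mul_lt_mul_of_pos_left hE1 hθ11
          simpa using this
        have heq := ode2 K₂ u v hu0 huv.le hne (fun r hr _ =>
          hf2_above_hi _ (hmid r hr) (hgt1 r hr))
        rw [h2u, h2v] at heq
        have hE1 : Real.exp (-γ20*(v-u)) < 1 := by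
          rw [← Real.exp_zero]
          refine Real.exp_lt_exp.mpr ?_
          have := mul_pos hγ2 (sub_pos.2 huv)
          linarith
        exact hfix (K₂/γ20) _ (Real.exp_pos _) hE1 (ne_of_gt hθ21K) heq
    -- main argument of P3
    by_cases hE : ∀ r, T₁ < r → x2 r ≠ θ21
    · exact alpha T₁ le_rfl hE
    push_neg at hE
    obtain ⟨p, hp1, hp2⟩ := hE
    have hp0 : (0:ℝ) ≤ p := le_trans hT₁0 hp1.le
    obtain ⟨tb, htbI, htbR⟩ := hmz p (p+1) hp0 (lt_add_one p)
    have htb2 : θ21 < x2 tb :=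
      lt_of_le_of_ne (hge tb (by linarith [htbI.1])) (Ne.symm (hregn tb htbR).2.2)
    obtain ⟨u, hu2, hup, hutb, hugap⟩ :
        ∃ u, x2 u = θ21 ∧ p ≤ u ∧ u < tb ∧ ∀ r, u < r → r ≤ tb → x2 r ≠ θ21 := by
      have hAcl : IsClosed ((Set.Ici (0:ℝ) ∩ x2 ⁻¹' {θ21}) ∩ Set.Icc p tb) :=
        hE2cl.inter isClosed_Icc
      have hAne : ((Set.Ici (0:ℝ) ∩ x2 ⁻¹' {θ21}) ∩ Set.Icc p tb).Nonempty :=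
        ⟨p, ⟨hp0, hp2⟩, le_rfl, htbI.1.le⟩
      have hAbdd : BddAbove ((Set.Ici (0:ℝ) ∩ x2 ⁻¹' {θ21}) ∩ Set.Icc p tb) :=
        ⟨tb, fun y hy => hy.2.2⟩
      have hm := hAcl.csSup_mem hAne hAbdd
      refine ⟨sSup _, hm.1.2, hm.2.1, lt_of_le_of_ne hm.2.2 (fun h => htb2.ne' (h ▸ hm.1.2)), ?_⟩
      intro r h1 h2 hc
      exact absurd (le_csSup hAbdd ⟨⟨le_trans hp0 (le_trans hm.2.1 h1.le), hc⟩,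
        le_trans hm.2.1 h1.le, h2⟩) (not_le.2 h1)
    by_cases hB : ((Set.Ici (0:ℝ) ∩ x2 ⁻¹' {θ21}) ∩ Set.Ici tb).Nonempty
    · obtain ⟨v, hv2, htbv, hvgap'⟩ :
          ∃ v, x2 v = θ21 ∧ tb ≤ v ∧ ∀ r, tb ≤ r → r < v → x2 r ≠ θ21 := by
        have hBcl : IsClosed ((Set.Ici (0:ℝ) ∩ x2 ⁻¹' {θ21}) ∩ Set.Ici tb) :=
          hE2cl.inter isClosed_Ici
        have hBbdd : BddBelow ((Set.Ici (0:ℝ) ∩ x2 ⁻¹' {θ21}) ∩ Set.Ici tb) :=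
          ⟨tb, fun y hy => hy.2⟩
        have hm := hBcl.csInf_mem hB hBbdd
        refine ⟨sInf _, hm.1.2, hm.2, fun r h1 h2 hc => ?_⟩
        exact absurd (csInf_le hBbdd ⟨⟨le_trans hp0 (le_trans htbI.1.le h1), hc⟩, h1⟩)
          (not_le.2 h2)
      have htbv' : tb < v := lt_of_le_of_ne htbv (fun h => htb2.ne' (h ▸ hv2))
      have huv : u < v := lt_trans hutb htbv'
      have hmidv : ∀ r ∈ Set.Ioo u v, θ21 < x2 r := by
        intro r hr
        have hne' : x2 r ≠ θ21 := by
          rcases le_or_gt r tb with h | h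
          · exact hugap r hr.1 h
          · exact hvgap' r h.le hr.2
        exact lt_of_le_of_ne (hge r (by linarith [hr.1, hup])) (Ne.symm hne')
      have hx1v := gapB u v (by linarith [hup]) huv hu2 hv2 hmidv
      have hv0 : (0:ℝ) ≤ v := le_trans hp0 (by linarith)
      obtain ⟨η, hη, hband⟩ := Metric.continuousWithinAt_iff.mp (hcont1 v hv0)
        (θ11 - x1 v) (by linarith)
      have hsmall : ∀ r, v ≤ r → r < v + η → x1 r < θ11 := by
        intro r h1 h2
        have hd : dist r v < η := by
          rw [Real.dist_eq, abs_lt]; constructor <;> linarith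
        have h3 := hband (le_trans hv0 h1) hd
        rw [Real.dist_eq] at h3
        rcases abs_lt.mp h3 with ⟨e1, e2⟩
        linarith
      obtain ⟨tc, htcI, htcR⟩ := hmz v (v + η) hv0 (by linarith)
      have htc2 : θ21 < x2 tc :=
        lt_of_le_of_ne (hge tc (by linarith [htcI.1])) (Ne.symm (hregn tc htcR).2.2)
      obtain ⟨u', hu'2, hu'v, hu'tc, hu'gap⟩ :
          ∃ u', x2 u' = θ21 ∧ v ≤ u' ∧ u' < tc ∧ ∀ r, u' < r → r ≤ tc → x2 r ≠ θ21 := by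
        have hAcl : IsClosed ((Set.Ici (0:ℝ) ∩ x2 ⁻¹' {θ21}) ∩ Set.Icc v tc) :=
          hE2cl.inter isClosed_Icc
        have hAne : ((Set.Ici (0:ℝ) ∩ x2 ⁻¹' {θ21}) ∩ Set.Icc v tc).Nonempty :=
          ⟨v, ⟨hv0, hv2⟩, le_rfl, htcI.1.le⟩
        have hAbdd : BddAbove ((Set.Ici (0:ℝ) ∩ x2 ⁻¹' {θ21}) ∩ Set.Icc v tc) :=
          ⟨tc, fun y hy => hy.2.2⟩
        have hm := hAcl.csSup_mem hAne hAbdd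
        refine ⟨sSup _, hm.1.2, hm.2.1, lt_of_le_of_ne hm.2.2 (fun h => htc2.ne' (h ▸ hm.1.2)), ?_⟩
        intro r h1 h2 hc
        exact absurd (le_csSup hAbdd ⟨⟨le_trans hv0 (le_trans hm.2.1 h1.le), hc⟩,
          le_trans hm.2.1 h1.le, h2⟩) (not_le.2 h1)
      have hx1u' : x1 u' < θ11 :=
        hsmall u' hu'v (lt_of_lt_of_le hu'tc (by linarith [htcI.2]))
      by_cases hB' : ((Set.Ici (0:ℝ) ∩ x2 ⁻¹' {θ21}) ∩ Set.Ici tc).Nonempty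
      · obtain ⟨v', hv'2, htcv, hv'gap⟩ :
            ∃ v', x2 v' = θ21 ∧ tc ≤ v' ∧ ∀ r, tc ≤ r → r < v' → x2 r ≠ θ21 := by
          have hBcl : IsClosed ((Set.Ici (0:ℝ) ∩ x2 ⁻¹' {θ21}) ∩ Set.Ici tc) :=
            hE2cl.inter isClosed_Ici
          have hBbdd : BddBelow ((Set.Ici (0:ℝ) ∩ x2 ⁻¹' {θ21}) ∩ Set.Ici tc) :=
            ⟨tc, fun y hy => hy.2⟩
          have hm := hBcl.csInf_mem hB' hBbdd
          refine ⟨sInf _, hm.1.2, hm.2, fun r h1 h2 hc => ?_⟩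
          exact absurd (csInf_le hBbdd ⟨⟨le_trans hv0 (le_trans htcI.1.le h1), hc⟩, h1⟩)
            (not_le.2 h2)
        have htcv' : tc < v' := lt_of_le_of_ne htcv (fun h => htc2.ne' (h ▸ hv'2))
        have hu'v' : u' < v' := lt_trans hu'tc htcv'
        have hmidv' : ∀ r ∈ Set.Ioo u' v', θ21 < x2 r := by
          intro r hr
          have hne' : x2 r ≠ θ21 := by
            rcases le_or_gt r tc with h | h
            · exact hu'gap r hr.1 h
            · exact hv'gap r h.le hr.2
          exact lt_of_le_of_ne (hge r (by linarith [hr.1, hu'v])) (Ne.symm hne')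
        exact gapA u' v' (by linarith [hu'v]) hu'v' hu'2 hv'2 hmidv' hx1u'.le
      · refine alpha tc (by linarith [htcI.1]) ?_
        intro r hr hc
        exact hB' ⟨r, ⟨⟨le_trans hv0 (le_trans htcI.1.le hr.le), hc⟩, hr.le⟩⟩
    · refine alpha tb (by linarith [htbI.1]) ?_
      intro r hr hc
      exact hB ⟨r, ⟨⟨le_trans hp0 (le_trans htbI.1.le hr.le), hc⟩, hr.le⟩⟩
  -- enter the trap region
  obtain ⟨T₂, hT₂1, hT₂x⟩ := P3
  have hT₂0 : (0:ℝ) ≤ T₂ := le_trans hT₁0 hT₂1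
  have trapx2 : ∀ t, T₂ ≤ t → x2 t < θ21 := by
    intro t ht
    by_contra hc
    push_neg at hc
    obtain ⟨σ, hσ1, hσ2, hσv, hσbefore⟩ := hfirst x2 θ21 T₂ t hT₂0 ht hcont2 hT₂x hc
    have heq := ode2 0 T₂ σ hT₂0 hσ1.le
      (fun r hr => (hσbefore r hr.1.le hr.2).ne)
      (fun r hr _ => by
        rw [hf2_below_lo _ (hσbefore r hr.1.le hr.2) (hx1lt r (le_trans hT₂1 hr.1.le)).le]
        ring)
    rw [hσv] at heq
    have heq' : θ21 = x2 T₂ * Real.exp (-γ20*(σ - T₂)) := by linear_combination heq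
    have hE0 := Real.exp_pos (-γ20*(σ - T₂))
    have hE1 : Real.exp (-γ20*(σ - T₂)) < 1 := by
      rw [← Real.exp_zero]
      refine Real.exp_lt_exp.mpr ?_
      have := mul_pos hγ2 (sub_pos.2 hσ1)
      linarith
    rcases le_or_gt (x2 T₂) 0 with h | h
    · have h1 : x2 T₂ * Real.exp (-γ20*(σ - T₂)) ≤ 0 := by
        have := mul_le_mul_of_nonneg_right h hE0.le
        simpa using this
      linarith
    · have h1 := mul_lt_mul_of_pos_left hE1 h
      rw [mul_one] at h1
      linarith
  have hform2 : ∀ t, T₂ ≤ t → x2 t = x2 T₂ * Real.exp (-γ20*(t - T₂)) := by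
    intro t ht
    have h := ode2 0 T₂ t hT₂0 ht
      (fun r hr => (trapx2 r hr.1.le).ne)
      (fun r hr _ => by
        rw [hf2_below_lo _ (trapx2 r hr.1.le) (hx1lt r (le_trans hT₂1 hr.1.le)).le]
        ring)
    rw [h]; ring_nf
  have hx2tend : Tendsto x2 atTop (nhds 0) := by
    refine (my_decay (x2 T₂) γ20 T₂ hγ2).congr' ?_
    filter_upwards [eventually_ge_atTop T₂] with t ht
    exact (hform2 t ht).symm
  -- x1 eventually exceeds θ11
  have hstep1 : ∃ t3, T₂ ≤ t3 ∧ θ11 < x1 t3 := by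
    by_contra hcon
    push_neg at hcon
    have hform : ∀ t, T₂ ≤ t →
        x1 t = K₁/γ10 + (x1 T₂ - K₁/γ10) * Real.exp (-γ10*(t - T₂)) := fun t ht =>
      ode1 K₁ γ10 T₂ t hγ1 hT₂0 ht (fun r hr => (trapx2 r hr.1.le).ne)
        (fun r hr _ => hf1_below_lo _ (trapx2 r hr.1.le) (hcon r hr.1.le))
    have htend : Tendsto (fun t => K₁/γ10 + (x1 T₂ - K₁/γ10) * Real.exp (-γ10*(t - T₂)))
        atTop (nhds (K₁/γ10)) := by
      have := (my_decay (x1 T₂ - K₁/γ10) γ10 T₂ hγ1).const_add (K₁/γ10)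
      simpa using this
    have hθK : θ11 < K₁/γ10 := by
      rw [lt_div_iff₀ hγ1]
      have := mul_lt_mul_of_pos_left hθ1 hγ1
      nlinarith
    have hev := htend.eventually_const_lt hθK
    obtain ⟨t', h1, h2⟩ := (hev.and (eventually_ge_atTop T₂)).exists
    have : θ11 < x1 t' := by rw [hform t' h2]; exact h1
    exact absurd this (not_lt.2 (hcon t' h2))
  obtain ⟨t3, ht3T, ht3x⟩ := hstep1
  have ht30 : (0:ℝ) ≤ t3 := le_trans hT₂0 ht3T
  have hstay : ∀ t, t3 ≤ t → θ11 < x1 t := by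
    intro t ht
    by_contra hc
    push_neg at hc
    obtain ⟨σ, hσ1, hσ2, hσv, hσbefore⟩ := hfirst (fun r => -x1 r) (-θ11) t3 t ht30 ht
      hcont1.neg (neg_lt_neg ht3x) (neg_le_neg hc)
    have hx1σ : x1 σ = θ11 := neg_inj.mp hσv
    have hmid : ∀ r, t3 ≤ r → r < σ → θ11 < x1 r := by
      intro r h1 h2
      have h' : -x1 r < -θ11 := hσbefore r h1 h2
      linarith
    have heq := ode1 K₁ b t3 σ hb ht30 hσ1.le
      (fun r hr => (trapx2 r (le_trans ht3T hr.1.le)).ne)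
      (fun r hr _ => hf1_below_hi _ (trapx2 r (le_trans ht3T hr.1.le)) (hmid r hr.1.le hr.2))
    rw [hx1σ] at heq
    have hKb : K₁ / b = xs := hxsdef.symm
    rw [hKb] at heq
    have hE0 := Real.exp_pos (-b*(σ - t3))
    have hE1 : Real.exp (-b*(σ - t3)) < 1 := by
      rw [← Real.exp_zero]
      refine Real.exp_lt_exp.mpr ?_
      have := mul_pos hb (sub_pos.2 hσ1)
      linarith
    rcases le_or_gt xs (x1 t3) with h | h
    · have h1 : 0 ≤ (x1 t3 - xs) * Real.exp (-b*(σ - t3)) := mul_nonneg (by linarith) hE0.le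
      linarith [hxs1]
    · have h1 := mul_lt_mul_of_neg_left hE1 (by linarith : x1 t3 - xs < 0)
      rw [mul_one] at h1
      linarith
  have hform1 : ∀ t, t3 ≤ t → x1 t = xs + (x1 t3 - xs) * Real.exp (-b*(t - t3)) := by
    intro t ht
    have h := ode1 K₁ b t3 t hb ht30 ht
      (fun r hr => (trapx2 r (le_trans ht3T hr.1.le)).ne)
      (fun r hr _ => hf1_below_hi _ (trapx2 r (le_trans ht3T hr.1.le)) (hstay r hr.1.le))
    rw [h]
  have hx1tend : Tendsto x1 atTop (nhds xs) := by
    have h1 : Tendsto (fun t => xs + (x1 t3 - xs)*Real.exp (-b*(t - t3))) atTop (nhds xs) := by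
      have := (my_decay (x1 t3 - xs) b t3 hb).const_add xs
      simpa using this
    refine h1.congr' ?_
    filter_upwards [eventually_ge_atTop t3] with t ht
    exact (hform1 t ht).symm
  have hfinal : Tendsto (fun t => (x1 t, x2 t)) atTop (nhds (xs, 0)) :=
    hx1tend.prodMk_nhds hx2tend
  have hxeq : (fun t => (x1 t, x2 t)) = x := by
    funext t
    simp [hx1def, hx2def]
  rw [hxeq] at hfinal
  exact hfinal
end

section
/- (Finite exit from a box.) Let D = ∏_{i=1}^n (θᵢ⁻, θᵢ⁺) be a box, γᵢ > 0, φ ∈ ℝⁿ, and suppose the set of escaping directions I = I⁺ ∪ I⁻ is nonempty, where I⁺ = {i : φᵢ > θᵢ⁺} and I⁻ = {i : φᵢ < θᵢ⁻} (equivalently, φ does not belong to the closure of D). For x ∈ D define τᵢ(x) = −(1/γᵢ)·ln((φᵢ − θᵢ⁺)/(φᵢ − xᵢ)) for i ∈ I⁺, τᵢ(x) = −(1/γᵢ)·ln((φᵢ − θᵢ⁻)/(φᵢ − xᵢ)) for i ∈ I⁻, and τ(x) = min_{i∈I} τᵢ(x). Then for every x ∈ D: 0 < τ(x) < ∞; the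 flow Φ(x,t), with Φᵢ(x,t) = φᵢ + e^{−γᵢt}(xᵢ − φᵢ), satisfies Φ(x,t) ∈ D for all 0 ≤ t < τ(x); Φ(x,τ(x)) lies on the topological boundary of D; and for any index i ∈ I attaining the minimum, the i-th coordinate of Φ(x,τ(x)) equals θᵢ⁺ if i ∈ I⁺ and θᵢ⁻ if i ∈ I⁻. -/
open MeasureTheory


lemma auxP (γ θm θp φ x : ℝ) (hγ : 0 < γ) (h1 : θm < x) (h2 : x < θp) (h3 : θp < φ) :
    0 < -(1/γ) * Real.log ((φ-θp)/(φ-x)) ∧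
    (∀ t, (φ + Real.exp (-γ*t)*(x-φ) < θp ↔ t < -(1/γ) * Real.log ((φ-θp)/(φ-x)))) ∧
    (∀ t, (φ + Real.exp (-γ*t)*(x-φ) ≤ θp ↔ t ≤ -(1/γ) * Real.log ((φ-θp)/(φ-x)))) ∧
    (∀ t, 0 ≤ t → θm < φ + Real.exp (-γ*t)*(x-φ)) ∧
    φ + Real.exp (-γ * (-(1/γ) * Real.log ((φ-θp)/(φ-x)))) * (x-φ) = θp := by
  have hd : 0 < φ - x := by linarith
  have hr0 : 0 < (φ-θp)/(φ-x) := div_pos (by linarith) hd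
  have hlin : -(1/γ) * Real.log ((φ-θp)/(φ-x)) = -Real.log ((φ-θp)/(φ-x))/γ := by ring
  have hlog : ∀ t : ℝ, ((φ-θp)/(φ-x) < Real.exp (-γ*t) ↔
      t < -(1/γ) * Real.log ((φ-θp)/(φ-x))) := by
    intro t
    rw [← Real.log_lt_iff_lt_exp hr0, hlin, lt_div_iff₀ hγ]
    constructor <;> intro <;> nlinarith
  have hloge : ∀ t : ℝ, ((φ-θp)/(φ-x) ≤ Real.exp (-γ*t) ↔
      t ≤ -(1/γ) * Real.log ((φ-θp)/(φ-x))) := by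
    intro t
    rw [← Real.log_le_iff_le_exp hr0, hlin, le_div_iff₀ hγ]
    constructor <;> intro <;> nlinarith
  have hmain : ∀ t, (φ + Real.exp (-γ*t)*(x-φ) < θp ↔
      t < -(1/γ) * Real.log ((φ-θp)/(φ-x))) := by
    intro t
    rw [← hlog t, div_lt_iff₀ hd]
    constructor <;> intro <;> nlinarith
  have hmaine : ∀ t, (φ + Real.exp (-γ*t)*(x-φ) ≤ θp ↔
      t ≤ -(1/γ) * Real.log ((φ-θp)/(φ-x))) := by
    intro t
    rw [← hloge t, div_le_iff₀ hd]
    constructor <;> intro <;> nlinarith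
  refine ⟨?_, hmain, hmaine, ?_, ?_⟩
  · have := (hmain 0).mp (by
      rw [show -γ * (0:ℝ) = 0 by ring, Real.exp_zero]; linarith)
    exact this
  · intro t ht
    have he1 : Real.exp (-γ*t) ≤ 1 := Real.exp_le_one_iff.mpr (by nlinarith)
    have he0 : 0 < Real.exp (-γ*t) := Real.exp_pos _
    nlinarith [mul_nonneg (sub_nonneg.mpr he1) hd.le]
  · have hexp : -γ * (-(1/γ) * Real.log ((φ-θp)/(φ-x))) = Real.log ((φ-θp)/(φ-x)) := by
      field_simp
    rw [hexp, Real.exp_log hr0]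
    field_simp
    ring

lemma auxM (γ θm θp φ x : ℝ) (hγ : 0 < γ) (h1 : θm < x) (h2 : x < θp) (h3 : φ < θm) :
    0 < -(1/γ) * Real.log ((φ-θm)/(φ-x)) ∧
    (∀ t, (θm < φ + Real.exp (-γ*t)*(x-φ) ↔ t < -(1/γ) * Real.log ((φ-θm)/(φ-x)))) ∧
    (∀ t, (θm ≤ φ + Real.exp (-γ*t)*(x-φ) ↔ t ≤ -(1/γ) * Real.log ((φ-θm)/(φ-x)))) ∧
    (∀ t, 0 ≤ t → φ + Real.exp (-γ*t)*(x-φ) < θp) ∧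
    φ + Real.exp (-γ * (-(1/γ) * Real.log ((φ-θm)/(φ-x)))) * (x-φ) = θm := by
  have hd : φ - x < 0 := by linarith
  have hr0 : 0 < (φ-θm)/(φ-x) := div_pos_of_neg_of_neg (by linarith) hd
  have hlin : -(1/γ) * Real.log ((φ-θm)/(φ-x)) = -Real.log ((φ-θm)/(φ-x))/γ := by ring
  have hlog : ∀ t : ℝ, ((φ-θm)/(φ-x) < Real.exp (-γ*t) ↔
      t < -(1/γ) * Real.log ((φ-θm)/(φ-x))) := by
    intro t
    rw [← Real.log_lt_iff_lt_exp hr0, hlin, lt_div_iff₀ hγ]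
    constructor <;> intro <;> nlinarith
  have hloge : ∀ t : ℝ, ((φ-θm)/(φ-x) ≤ Real.exp (-γ*t) ↔
      t ≤ -(1/γ) * Real.log ((φ-θm)/(φ-x))) := by
    intro t
    rw [← Real.log_le_iff_le_exp hr0, hlin, le_div_iff₀ hγ]
    constructor <;> intro <;> nlinarith
  have hmain : ∀ t, (θm < φ + Real.exp (-γ*t)*(x-φ) ↔
      t < -(1/γ) * Real.log ((φ-θm)/(φ-x))) := by
    intro t
    rw [← hlog t, div_lt_iff_of_neg hd]
    constructor <;> intro <;> nlinarith
  have hmaine : ∀ t, (θm ≤ φ + Real.exp (-γ*t)*(x-φ) ↔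
      t ≤ -(1/γ) * Real.log ((φ-θm)/(φ-x))) := by
    intro t
    rw [← hloge t, div_le_iff_of_neg hd]
    constructor <;> intro <;> nlinarith
  refine ⟨?_, hmain, hmaine, ?_, ?_⟩
  · have := (hmain 0).mp (by
      rw [show -γ * (0:ℝ) = 0 by ring, Real.exp_zero]; linarith)
    exact this
  · intro t ht
    have he1 : Real.exp (-γ*t) ≤ 1 := Real.exp_le_one_iff.mpr (by nlinarith)
    have he0 : 0 < Real.exp (-γ*t) := Real.exp_pos _
    nlinarith [mul_nonneg (sub_nonneg.mpr he1) (by linarith : (0:ℝ) ≤ x - φ)]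
  · have hexp : -γ * (-(1/γ) * Real.log ((φ-θm)/(φ-x))) = Real.log ((φ-θm)/(φ-x)) := by
      field_simp
    rw [hexp, Real.exp_log hr0]
    have hxne : φ - x ≠ 0 := by linarith
    field_simp
    ring

/-- Finite exit from a box: if the focal point has at least one escaping direction,
then from every interior point the affine flow leaves the box at the finite positive
exit time `τ(x) = min over escaping directions of the switching times`, staying inside
before, hitting the boundary at `τ(x)`, on the wall(s) attaining the minimum. -/
theorem stmt10 (n : ℕ) (hn : 1 ≤ n) (θm θp γ φ : Fin n → ℝ)
    (hθ : ∀ i, θm i < θp i) (hγ : ∀ i, 0 < γ i)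
    (I : Finset (Fin n))
    (hI : I = Finset.univ.filter fun i => θp i < φ i ∨ φ i < θm i)
    (hne : I.Nonempty)
    (τi : Fin n → (Fin n → ℝ) → ℝ)
    (hτi : ∀ i x, τi i x =
      if θp i < φ i then -(1 / γ i) * Real.log ((φ i - θp i) / (φ i - x i))
      else -(1 / γ i) * Real.log ((φ i - θm i) / (φ i - x i)))
    (τ : (Fin n → ℝ) → ℝ)
    (hτ : ∀ x, τ x = I.inf' hne fun i => τi i x)
    (Φ : (Fin n → ℝ) → ℝ → Fin n → ℝ)
    (hΦ : ∀ x t i, Φ x t i = φ i + Real.exp (-(γ i) * t) * (x i - φ i))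
    (D : Set (Fin n → ℝ)) (hD : D = {y | ∀ i, y i ∈ Set.Ioo (θm i) (θp i)})
    (x : Fin n → ℝ) (hx : x ∈ D) :
    0 < τ x ∧
    (∀ t, 0 ≤ t → t < τ x → Φ x t ∈ D) ∧
    Φ x (τ x) ∈ frontier D ∧
    (∀ i ∈ I, τi i x = τ x →
      (if θp i < φ i then Φ x (τ x) i = θp i else Φ x (τ x) i = θm i)) := by
  have hxmem : ∀ i, θm i < x i ∧ x i < θp i := by
    rw [hD] at hx; exact fun i => ⟨(hx i).1, (hx i).2⟩
  have hImem : ∀ i, i ∈ I ↔ (θp i < φ i ∨ φ i < θm i) := by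
    intro i; rw [hI]; simp
  -- escaping up walls
  have hiP : ∀ i, θp i < φ i →
      0 < τi i x ∧
      (∀ t, (Φ x t i < θp i ↔ t < τi i x)) ∧
      (∀ t, (Φ x t i ≤ θp i ↔ t ≤ τi i x)) ∧
      (∀ t, 0 ≤ t → θm i < Φ x t i) ∧
      Φ x (τi i x) i = θp i := by
    intro i hi
    have ht : τi i x = -(1 / γ i) * Real.log ((φ i - θp i) / (φ i - x i)) := by
      rw [hτi, if_pos hi]
    have h := auxP (γ i) (θm i) (θp i) (φ i) (x i) (hγ i) (hxmem i).1 (hxmem i).2 hi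
    simp only [ht, hΦ]
    exact h
  have hiM : ∀ i, ¬ θp i < φ i → φ i < θm i →
      0 < τi i x ∧
      (∀ t, (θm i < Φ x t i ↔ t < τi i x)) ∧
      (∀ t, (θm i ≤ Φ x t i ↔ t ≤ τi i x)) ∧
      (∀ t, 0 ≤ t → Φ x t i < θp i) ∧
      Φ x (τi i x) i = θm i := by
    intro i hi hi'
    have ht : τi i x = -(1 / γ i) * Real.log ((φ i - θm i) / (φ i - x i)) := by
      rw [hτi, if_neg hi]
    have h := auxM (γ i) (θm i) (θp i) (φ i) (x i) (hγ i) (hxmem i).1 (hxmem i).2 hi'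
    simp only [ht, hΦ]
    exact h
  have hMid : ∀ i, ¬ θp i < φ i → ¬ φ i < θm i →
      ∀ t, 0 ≤ t → θm i < Φ x t i ∧ Φ x t i < θp i := by
    intro i hi1 hi2 t ht
    push_neg at hi1 hi2
    have he1 : Real.exp (-(γ i)*t) ≤ 1 :=
      Real.exp_le_one_iff.mpr (by nlinarith [hγ i])
    have he0 : 0 < Real.exp (-(γ i)*t) := Real.exp_pos _
    rw [hΦ]
    constructor
    · nlinarith [mul_nonneg (sub_nonneg.mpr he1) (by linarith [(hxmem i).1, hi2] : (0:ℝ) ≤ φ i - θm i),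
        mul_pos he0 (by linarith [(hxmem i).1] : (0:ℝ) < x i - θm i)]
    · nlinarith [mul_nonneg (sub_nonneg.mpr he1) (by linarith [hi1] : (0:ℝ) ≤ θp i - φ i),
        mul_pos he0 (by linarith [(hxmem i).2] : (0:ℝ) < θp i - x i)]
  have hτpos : ∀ i ∈ I, 0 < τi i x := by
    intro i hi
    rcases (hImem i).1 hi with h | h
    · exact (hiP i h).1
    · by_cases h' : θp i < φ i
      · exact (hiP i h').1
      · exact (hiM i h' h).1
  have h0τ : 0 < τ x := by
    rw [hτ]; exact (Finset.lt_inf'_iff hne).mpr hτpos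
  have hτle : ∀ i ∈ I, τ x ≤ τi i x := by
    intro i hi; rw [hτ]; exact Finset.inf'_le _ hi
  have hint : ∀ t, 0 ≤ t → t < τ x → Φ x t ∈ D := by
    intro t ht0 htτ
    rw [hD]
    intro i
    by_cases h1 : θp i < φ i
    · have hi : i ∈ I := (hImem i).2 (Or.inl h1)
      obtain ⟨_, hlt, _, hlb, _⟩ := hiP i h1
      exact ⟨hlb t ht0, (hlt t).mpr (lt_of_lt_of_le htτ (hτle i hi))⟩
    · by_cases h2 : φ i < θm i
      · have hi : i ∈ I := (hImem i).2 (Or.inr h2)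
        obtain ⟨_, hlt, _, hub, _⟩ := hiM i h1 h2
        exact ⟨(hlt t).mpr (lt_of_lt_of_le htτ (hτle i hi)), hub t ht0⟩
      · exact hMid i h1 h2 t ht0
  have hcl : ∀ i, Φ x (τ x) i ∈ Set.Icc (θm i) (θp i) := by
    intro i
    by_cases h1 : θp i < φ i
    · have hi : i ∈ I := (hImem i).2 (Or.inl h1)
      obtain ⟨_, _, hle, hlb, _⟩ := hiP i h1
      exact ⟨(hlb _ h0τ.le).le, (hle _).mpr (hτle i hi)⟩
    · by_cases h2 : φ i < θm i
      · have hi : i ∈ I := (hImem i).2 (Or.inr h2)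
        obtain ⟨_, _, hle, hub, _⟩ := hiM i h1 h2
        exact ⟨(hle _).mpr (hτle i hi), (hub _ h0τ.le).le⟩
      · exact ⟨(hMid i h1 h2 _ h0τ.le).1.le, (hMid i h1 h2 _ h0τ.le).2.le⟩
  have hwall : ∀ i ∈ I, τi i x = τ x →
      (if θp i < φ i then Φ x (τ x) i = θp i else Φ x (τ x) i = θm i) := by
    intro i hi heq
    by_cases h1 : θp i < φ i
    · rw [if_pos h1, ← heq]
      exact (hiP i h1).2.2.2.2
    · rw [if_neg h1, ← heq]
      rcases (hImem i).1 hi with h | h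
      · exact absurd h h1
      · exact (hiM i h1 h).2.2.2.2
  have hDpi : D = Set.pi Set.univ fun i => Set.Ioo (θm i) (θp i) := by
    rw [hD]; ext y; simp [Set.mem_pi]
  have hDopen : IsOpen D := by
    rw [hDpi]
    exact isOpen_set_pi Set.finite_univ fun i _ => isOpen_Ioo
  have hclD : closure D = Set.pi Set.univ fun i => Set.Icc (θm i) (θp i) := by
    rw [hDpi, closure_pi_set]
    have : (fun i => closure (Set.Ioo (θm i) (θp i))) = fun i => Set.Icc (θm i) (θp i) :=
      funext fun i => closure_Ioo (hθ i).ne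
    rw [this]
  have hfront : Φ x (τ x) ∈ frontier D := by
    rw [frontier, hDopen.interior_eq]
    constructor
    · rw [hclD]; exact fun i _ => hcl i
    · -- not in D
      obtain ⟨i₀, hi₀, hmin⟩ := Finset.exists_mem_eq_inf' hne (fun i => τi i x)
      have heq : τi i₀ x = τ x := by rw [hτ]; exact hmin.symm
      have hw := hwall i₀ hi₀ heq
      intro hmem
      rw [hD] at hmem
      by_cases h1 : θp i₀ < φ i₀
      · rw [if_pos h1] at hw
        exact absurd hw (ne_of_lt (hmem i₀).2)
      · rw [if_neg h1] at hw
        exact absurd hw.symm (ne_of_lt (hmem i₀).1)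
  exact ⟨h0τ, hint, hfront, hwall⟩
end

section
/- (Characterization of transitions through a wall.) Let D = ∏_{i=1}^n (θᵢ⁻, θᵢ⁺) be a box, γᵢ > 0, φ ∈ ℝⁿ a focal point, I⁺ = {i : φᵢ > θᵢ⁺}, I⁻ = {i : φᵢ < θᵢ⁻}, I = I⁺ ∪ I⁻, and τᵢ, τ as defined by the switching/exit time formulas. Fix an index k. (a) If φ_k ≤ θ_k⁺, then for every x ∈ D and every t ≥ 0, the k-th coordinate of the flow Φ_k(x,t) = φ_k + e^{−γ_k t}(x_k − φ_k) is strictly less than θ_k⁺; hence no trajectory starting in D exits through the wall x_k = θ_k⁺. (b) If φ_k > θ_k⁺, then the set of x ∈ D with τ_k(x) < τ_j(x) for all j ∈ I \ {k} is a nonempty open subset of D (hence of positive Lebesgue measure), and every trajectory starting in this set exits D through the wall x_k = θ_k⁺. (The analogous statement holds for the lower wall x_k = θ_k⁻ with the condition φ_k < θ_k⁻.) -/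
open MeasureTheory

private lemma up_bound {γ φ θp x t : ℝ} (hγ : 0 < γ) (hx : x < θp) (hφ : φ ≤ θp)
    (ht : 0 ≤ t) : φ + Real.exp (-γ * t) * (x - φ) < θp := by
  have h1 : Real.exp (-γ * t) ≤ 1 := Real.exp_le_one_iff.mpr (by nlinarith)
  have h2 : 0 < Real.exp (-γ * t) := Real.exp_pos _
  nlinarith

private lemma low_bound {γ φ θm x t : ℝ} (hγ : 0 < γ) (hx : θm < x) (hφ : θm ≤ φ)
    (ht : 0 ≤ t) : θm < φ + Real.exp (-γ * t) * (x - φ) := by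
  have h1 : Real.exp (-γ * t) ≤ 1 := Real.exp_le_one_iff.mpr (by nlinarith)
  have h2 : 0 < Real.exp (-γ * t) := Real.exp_pos _
  nlinarith

private lemma one_dim {γ φ θ x : ℝ} (hγ : 0 < γ)
    (hr0 : 0 < (φ - θ) / (φ - x)) (hr1 : (φ - θ) / (φ - x) < 1)
    (hne : φ - x ≠ 0) :
    0 < -(1 / γ) * Real.log ((φ - θ) / (φ - x)) ∧
    (∀ t : ℝ, t < -(1 / γ) * Real.log ((φ - θ) / (φ - x)) →
      (φ - θ) / (φ - x) < Real.exp (-γ * t)) ∧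
    Real.exp (-γ * (-(1 / γ) * Real.log ((φ - θ) / (φ - x)))) = (φ - θ) / (φ - x) ∧
    φ + ((φ - θ) / (φ - x)) * (x - φ) = θ := by
  have hlog : Real.log ((φ - θ) / (φ - x)) < 0 := Real.log_neg hr0 hr1
  have hγ' : γ ≠ 0 := ne_of_gt hγ
  have hexp : -γ * (-(1 / γ) * Real.log ((φ - θ) / (φ - x)))
      = Real.log ((φ - θ) / (φ - x)) := by field_simp
  refine ⟨?_, ?_, ?_, ?_⟩
  · have h1 : -(1 / γ) < 0 := neg_lt_zero.mpr (by positivity)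
    exact mul_pos_of_neg_of_neg h1 hlog
  · intro t ht
    have h2 : Real.log ((φ - θ) / (φ - x)) < -γ * t := by
      nlinarith [mul_pos hγ (sub_pos.mpr ht)]
    have h3 := Real.exp_lt_exp.mpr h2
    rwa [Real.exp_log hr0] at h3
  · rw [hexp, Real.exp_log hr0]
  · field_simp
    ring


/-- Characterization of transitions through a wall. (a) If `φ_k ≤ θ_k⁺`, no trajectory
starting in the box `D` ever exits through the upper wall in direction `k`. (b) If
`φ_k > θ_k⁺`, the set of points of `D` whose switching time in direction `k` is
strictly minimal is a nonempty open subset of `D` (hence of positive Lebesgue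
measure), and every trajectory starting there exits `D` through the wall
`x_k = θ_k⁺`. (The analogous statement for the lower wall is included.) -/
theorem stmt12 (n : ℕ) (hn : 1 ≤ n) (θm θp γ φ : Fin n → ℝ)
    (hθ : ∀ i, θm i < θp i) (hγ : ∀ i, 0 < γ i)
    (I : Set (Fin n)) (hI : I = {i | θp i < φ i ∨ φ i < θm i})
    (τ : Fin n → (Fin n → ℝ) → ℝ)
    (hτ : ∀ i x, τ i x =
      if θp i < φ i then -(1 / γ i) * Real.log ((φ i - θp i) / (φ i - x i))
      else -(1 / γ i) * Real.log ((φ i - θm i) / (φ i - x i)))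
    (Φ : (Fin n → ℝ) → ℝ → Fin n → ℝ)
    (hΦ : ∀ x t i, Φ x t i = φ i + Real.exp (-(γ i) * t) * (x i - φ i))
    (D : Set (Fin n → ℝ)) (hD : D = {y | ∀ i, y i ∈ Set.Ioo (θm i) (θp i)})
    (k : Fin n) :
    -- (a) upper wall unreachable when φ_k ≤ θ_k⁺
    (φ k ≤ θp k → ∀ x ∈ D, ∀ t, 0 ≤ t → Φ x t k < θp k) ∧
    -- (a') lower wall unreachable when φ_k ≥ θ_k⁻
    (θm k ≤ φ k → ∀ x ∈ D, ∀ t, 0 ≤ t → θm k < Φ x t k) ∧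
    -- (b) upper wall crossed on a nonempty open set of initial conditions
    (θp k < φ k →
      Set.Nonempty {x ∈ D | ∀ j ∈ I, j ≠ k → τ k x < τ j x} ∧
      IsOpen {x ∈ D | ∀ j ∈ I, j ≠ k → τ k x < τ j x} ∧
      0 < volume {x ∈ D | ∀ j ∈ I, j ≠ k → τ k x < τ j x} ∧
      ∀ x ∈ {x ∈ D | ∀ j ∈ I, j ≠ k → τ k x < τ j x},
        Φ x (τ k x) k = θp k ∧
        (∀ t, 0 ≤ t → t < τ k x → Φ x t ∈ D) ∧
        (∀ j, j ≠ k → Φ x (τ k x) j ∈ Set.Ioo (θm j) (θp j))) ∧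
    -- (b') lower wall crossed on a nonempty open set of initial conditions
    (φ k < θm k →
      Set.Nonempty {x ∈ D | ∀ j ∈ I, j ≠ k → τ k x < τ j x} ∧
      IsOpen {x ∈ D | ∀ j ∈ I, j ≠ k → τ k x < τ j x} ∧
      0 < volume {x ∈ D | ∀ j ∈ I, j ≠ k → τ k x < τ j x} ∧
      ∀ x ∈ {x ∈ D | ∀ j ∈ I, j ≠ k → τ k x < τ j x},
        Φ x (τ k x) k = θm k ∧
        (∀ t, 0 ≤ t → t < τ k x → Φ x t ∈ D) ∧
        (∀ j, j ≠ k → Φ x (τ k x) j ∈ Set.Ioo (θm j) (θp j))) := by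
  
  classical
  subst hI
  subst hD
  set D : Set (Fin n → ℝ) := {y | ∀ i, y i ∈ Set.Ioo (θm i) (θp i)} with hD
  set S : Set (Fin n → ℝ) :=
    {x ∈ D | ∀ j ∈ {i | θp i < φ i ∨ φ i < θm i}, j ≠ k → τ k x < τ j x} with hS
  -- D is open
  have hDopen : IsOpen D := by
    have : D = Set.pi Set.univ (fun i => Set.Ioo (θm i) (θp i)) := by
      ext y; simp [hD, Set.mem_pi]
    rw [this]
    exact isOpen_set_pi Set.finite_univ (fun i _ => isOpen_Ioo)
  -- coordinates outside I stay strictly inside forever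
  have hout : ∀ j, ¬(θp j < φ j ∨ φ j < θm j) → ∀ x ∈ D, ∀ t : ℝ, 0 ≤ t →
      Φ x t j ∈ Set.Ioo (θm j) (θp j) := by
    intro j hj x hxD t ht
    push_neg at hj
    obtain ⟨hx1, hx2⟩ := hxD j
    rw [hΦ]
    exact ⟨low_bound (hγ j) hx1 hj.2 ht, up_bound (hγ j) hx2 hj.1 ht⟩
  -- main facts for coordinates in I
  have hiD : ∀ i, (θp i < φ i ∨ φ i < θm i) → ∀ x ∈ D,
      0 < τ i x ∧
      (∀ t : ℝ, 0 ≤ t → t < τ i x → Φ x t i ∈ Set.Ioo (θm i) (θp i)) ∧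
      Φ x (τ i x) i = (if θp i < φ i then θp i else θm i) := by
    intro i hi x hxD
    obtain ⟨hx1, hx2⟩ := hxD i
    rcases hi with hi | hi
    · -- upper branch
      have hd : 0 < φ i - x i := by linarith
      have hr0 : 0 < (φ i - θp i) / (φ i - x i) := div_pos (by linarith) hd
      have hr1 : (φ i - θp i) / (φ i - x i) < 1 := (div_lt_one hd).mpr (by linarith)
      have hτi : τ i x = -(1 / γ i) * Real.log ((φ i - θp i) / (φ i - x i)) := by
        rw [hτ, if_pos hi]
      obtain ⟨h1, h2, h3, h4⟩ := one_dim (hγ i) hr0 hr1 (ne_of_gt hd)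
      refine ⟨hτi ▸ h1, ?_, ?_⟩
      · intro t ht htτ
        rw [hτi] at htτ
        have hrt := h2 t htτ
        rw [hΦ]
        refine ⟨low_bound (hγ i) hx1 (le_of_lt ((hθ i).trans hi)) ht, ?_⟩
        have hm := mul_lt_mul_of_neg_right hrt (show x i - φ i < 0 by linarith)
        linarith
      · rw [hΦ, hτi, h3, if_pos hi]
        exact h4
    · -- lower branch
      have hi' : ¬ θp i < φ i := by linarith [hθ i]
      have hd : φ i - x i < 0 := by linarith
      have heq : (φ i - θm i) / (φ i - x i) = (θm i - φ i) / (x i - φ i) := by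
        rw [show θm i - φ i = -(φ i - θm i) by ring, show x i - φ i = -(φ i - x i) by ring,
          neg_div_neg_eq]
      have hd' : 0 < x i - φ i := by linarith
      have hr0 : 0 < (φ i - θm i) / (φ i - x i) := by
        rw [heq]; exact div_pos (by linarith) hd'
      have hr1 : (φ i - θm i) / (φ i - x i) < 1 := by
        rw [heq]; exact (div_lt_one hd').mpr (by linarith)
      have hτi : τ i x = -(1 / γ i) * Real.log ((φ i - θm i) / (φ i - x i)) := by
        rw [hτ, if_neg hi']
      obtain ⟨h1, h2, h3, h4⟩ := one_dim (hγ i) hr0 hr1 (ne_of_lt hd)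
      refine ⟨hτi ▸ h1, ?_, ?_⟩
      · intro t ht htτ
        rw [hτi] at htτ
        have hrt := h2 t htτ
        rw [hΦ]
        refine ⟨?_, up_bound (hγ i) hx2 (le_of_lt (hi.trans (hθ i))) ht⟩
        have hm := mul_lt_mul_of_pos_right hrt hd'
        linarith
      · rw [hΦ, hτi, h3, if_neg hi']
        exact h4
  -- continuity of switching times on D
  have hτcont : ∀ j, (θp j < φ j ∨ φ j < θm j) → ∀ x ∈ D, ContinuousAt (τ j) x := by
    intro j hj x hxD
    obtain ⟨hx1, hx2⟩ := hxD j
    rcases hj with hj | hj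
    · have hfun : τ j = fun y : Fin n → ℝ =>
          -(1 / γ j) * Real.log ((φ j - θp j) / (φ j - y j)) := by
        funext y; rw [hτ, if_pos hj]
      rw [hfun]
      have hd : (0:ℝ) < φ j - x j := by linarith
      have hdiv : ContinuousAt (fun y : Fin n → ℝ => (φ j - θp j) / (φ j - y j)) x :=
        ContinuousAt.div continuousAt_const
          (continuousAt_const.sub (continuous_apply j).continuousAt) (ne_of_gt hd)
      exact continuousAt_const.mul (hdiv.log (ne_of_gt (div_pos (by linarith) hd)))
    · have hj' : ¬ θp j < φ j := by linarith [hθ j]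
      have hfun : τ j = fun y : Fin n → ℝ =>
          -(1 / γ j) * Real.log ((φ j - θm j) / (φ j - y j)) := by
        funext y; rw [hτ, if_neg hj']
      rw [hfun]
      have hd : φ j - x j < 0 := by linarith
      have hdiv : ContinuousAt (fun y : Fin n → ℝ => (φ j - θm j) / (φ j - y j)) x :=
        ContinuousAt.div continuousAt_const
          (continuousAt_const.sub (continuous_apply j).continuousAt) (ne_of_lt hd)
      exact continuousAt_const.mul
        (hdiv.log (ne_of_gt (div_pos_of_neg_of_neg (by linarith) hd)))
  -- the main block, for k ∈ I
  have main : (θp k < φ k ∨ φ k < θm k) →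
      S.Nonempty ∧ IsOpen S ∧ 0 < volume S ∧
      ∀ x ∈ S,
        Φ x (τ k x) k = (if θp k < φ k then θp k else θm k) ∧
        (∀ t, 0 ≤ t → t < τ k x → Φ x t ∈ D) ∧
        (∀ j, j ≠ k → Φ x (τ k x) j ∈ Set.Ioo (θm j) (θp j)) := by
    intro hk
    -- nonemptiness
    have hSne : S.Nonempty := by
      set x₀ : Fin n → ℝ := fun i => (θm i + θp i) / 2 with hx₀
      have hx₀D : x₀ ∈ D := by
        intro i
        constructor
        · show θm i < (θm i + θp i) / 2; linarith [hθ i]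
        · show (θm i + θp i) / 2 < θp i; linarith [hθ i]
      have hex : ∃ ε : ℝ, 0 < ε ∧ ∀ j, (θp j < φ j ∨ φ j < θm j) → j ≠ k → ε ≤ τ j x₀ := by
        set F : Finset (Fin n) :=
          Finset.univ.filter (fun j => (θp j < φ j ∨ φ j < θm j) ∧ j ≠ k) with hF
        rcases F.eq_empty_or_nonempty with hFe | hFne
        · refine ⟨1, one_pos, fun j hj hjk => absurd ?_ (by simp [hFe] : j ∉ F)⟩
          simp [hF, hj, hjk]
        · obtain ⟨j₀, hj₀F, hj₀min⟩ := F.exists_min_image (fun j => τ j x₀) hFne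
          have hj₀ : θp j₀ < φ j₀ ∨ φ j₀ < θm j₀ := by
            simp only [hF, Finset.mem_filter] at hj₀F; exact hj₀F.2.1
          exact ⟨τ j₀ x₀, (hiD j₀ hj₀ x₀ hx₀D).1,
            fun j hj hjk => hj₀min j (by simp [hF, hj, hjk])⟩
      obtain ⟨ε, hε, hεle⟩ := hex
      have hE1 : 1 < Real.exp (γ k * ε) := Real.one_lt_exp_iff.mpr (mul_pos (hγ k) hε)
      have hE0 : 0 < Real.exp (γ k * ε) := Real.exp_pos _
      rcases hk with hk1 | hk2
      · -- upper wall
        set B := φ k - (φ k - θp k) * Real.exp (γ k * ε) with hB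
        have hBθ : B < θp k := by nlinarith [hθ k]
        set c := max ((θm k + θp k) / 2) ((B + θp k) / 2) with hc
        have hc1 : θm k < c := lt_of_lt_of_le (by linarith [hθ k]) (le_max_left _ _)
        have hc2 : c < θp k := max_lt (by linarith [hθ k]) (by linarith)
        have hcB : B < c := lt_of_lt_of_le (by linarith) (le_max_right _ _)
        set x₁ := Function.update x₀ k c with hx₁
        have hx₁k : x₁ k = c := Function.update_self k c x₀
        have hx₁D : x₁ ∈ D := by
          intro i
          by_cases hik : i = k
          · subst hik; rw [hx₁k]; exact ⟨hc1, hc2⟩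
          · rw [hx₁, Function.update_of_ne hik]; exact hx₀D i
        have hτj : ∀ j, j ≠ k → τ j x₁ = τ j x₀ := by
          intro j hjk
          rw [hτ, hτ, hx₁, Function.update_of_ne hjk]
        have hτk : τ k x₁ < ε := by
          have hd : 0 < φ k - c := by linarith
          have hr0 : 0 < (φ k - θp k) / (φ k - c) := div_pos (by linarith) hd
          have hgt : Real.exp (-(γ k * ε)) < (φ k - θp k) / (φ k - c) := by
            rw [Real.exp_neg, inv_eq_one_div, div_lt_div_iff₀ hE0 hd]
            nlinarith
          have hlog : -(γ k * ε) < Real.log ((φ k - θp k) / (φ k - c)) :=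
            (Real.lt_log_iff_exp_lt hr0).mpr hgt
          rw [hτ, if_pos hk1, hx₁k]
          have hA : 1 / γ k * -(γ k * ε) = -ε := by
            field_simp
            rw [div_self (hγ k).ne']
          have hB' := mul_lt_mul_of_pos_left hlog (one_div_pos.mpr (hγ k))
          rw [hA] at hB'
          linarith
        exact ⟨x₁, hx₁D, fun j hj hjk => by
          rw [hτj j hjk]; exact lt_of_lt_of_le hτk (hεle j hj hjk)⟩
      · -- lower wall
        have hk2' : ¬ θp k < φ k := by linarith [hθ k]
        set B := φ k + (θm k - φ k) * Real.exp (γ k * ε) with hB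
        have hBθ : θm k < B := by nlinarith
        set c := min ((θm k + θp k) / 2) ((θm k + B) / 2) with hc
        have hc1 : θm k < c := lt_min (by linarith [hθ k]) (by linarith)
        have hc2 : c < θp k := lt_of_le_of_lt (min_le_left _ _) (by linarith [hθ k])
        have hcB : c < B := lt_of_le_of_lt (min_le_right _ _) (by linarith)
        set x₁ := Function.update x₀ k c with hx₁
        have hx₁k : x₁ k = c := Function.update_self k c x₀
        have hx₁D : x₁ ∈ D := by
          intro i
          by_cases hik : i = k
          · subst hik; rw [hx₁k]; exact ⟨hc1, hc2⟩
          · rw [hx₁, Function.update_of_ne hik]; exact hx₀D i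
        have hτj : ∀ j, j ≠ k → τ j x₁ = τ j x₀ := by
          intro j hjk
          rw [hτ, hτ, hx₁, Function.update_of_ne hjk]
        have hτk : τ k x₁ < ε := by
          have hd : φ k - c < 0 := by linarith
          have hd' : 0 < c - φ k := by linarith
          have heq : (φ k - θm k) / (φ k - c) = (θm k - φ k) / (c - φ k) := by
            rw [show θm k - φ k = -(φ k - θm k) by ring, show c - φ k = -(φ k - c) by ring,
              neg_div_neg_eq]
          have hr0 : 0 < (φ k - θm k) / (φ k - c) := by
            rw [heq]; exact div_pos (by linarith) hd'
          have hgt : Real.exp (-(γ k * ε)) < (φ k - θm k) / (φ k - c) := by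
            rw [heq, Real.exp_neg, inv_eq_one_div, div_lt_div_iff₀ hE0 hd']
            nlinarith
          have hlog : -(γ k * ε) < Real.log ((φ k - θm k) / (φ k - c)) :=
            (Real.lt_log_iff_exp_lt hr0).mpr hgt
          rw [hτ, if_neg hk2', hx₁k]
          have hA : 1 / γ k * -(γ k * ε) = -ε := by
            field_simp
            rw [div_self (hγ k).ne']
          have hB' := mul_lt_mul_of_pos_left hlog (one_div_pos.mpr (hγ k))
          rw [hA] at hB'
          linarith
        exact ⟨x₁, hx₁D, fun j hj hjk => by
          rw [hτj j hjk]; exact lt_of_lt_of_le hτk (hεle j hj hjk)⟩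
    -- openness
    have hSopen : IsOpen S := by
      rw [isOpen_iff_mem_nhds]
      intro x hxS
      obtain ⟨hxD, hxlt⟩ := hxS
      have hall : ∀ j, ∀ᶠ y in nhds x,
          ((θp j < φ j ∨ φ j < θm j) → j ≠ k → τ k y < τ j y) := by
        intro j
        by_cases hj : (θp j < φ j ∨ φ j < θm j) ∧ j ≠ k
        · have hev := (hτcont k hk x hxD).eventually_lt (hτcont j hj.1 x hxD)
            (hxlt j hj.1 hj.2)
          exact hev.mono (fun y hy _ _ => hy)
        · exact Filter.Eventually.of_forall (fun y hA hB => absurd ⟨hA, hB⟩ hj)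
      filter_upwards [hDopen.mem_nhds hxD, Filter.eventually_all.mpr hall] with y hyD hylt
      exact ⟨hyD, hylt⟩
    refine ⟨hSne, hSopen, hSopen.measure_pos volume hSne, ?_⟩
    intro x hxS
    obtain ⟨hxD, hxlt⟩ := hxS
    obtain ⟨hkpos, hkins, hkexit⟩ := hiD k hk x hxD
    refine ⟨hkexit, ?_, ?_⟩
    · intro t ht htk i
      by_cases hi : θp i < φ i ∨ φ i < θm i
      · by_cases hik : i = k
        · subst hik; exact (hiD i hi x hxD).2.1 t ht htk
        · exact (hiD i hi x hxD).2.1 t ht (htk.trans (hxlt i hi hik))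
      · exact hout i hi x hxD t ht
    · intro j hjk
      by_cases hj : θp j < φ j ∨ φ j < θm j
      · exact (hiD j hj x hxD).2.1 (τ k x) (le_of_lt hkpos) (hxlt j hj hjk)
      · exact hout j hj x hxD (τ k x) (le_of_lt hkpos)
  refine ⟨?_, ?_, ?_, ?_⟩
  · intro h x hxD t ht
    rw [hΦ]
    exact up_bound (hγ k) (hxD k).2 h ht
  · intro h x hxD t ht
    rw [hΦ]
    exact low_bound (hγ k) (hxD k).1 h ht
  · intro hb
    obtain ⟨h1, h2, h3, h4⟩ := main (Or.inl hb)
    refine ⟨h1, h2, h3, fun x hx => ?_⟩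
    obtain ⟨e1, e2, e3⟩ := h4 x hx
    rw [if_pos hb] at e1
    exact ⟨e1, e2, e3⟩
  · intro hb
    obtain ⟨h1, h2, h3, h4⟩ := main (Or.inr hb)
    refine ⟨h1, h2, h3, fun x hx => ?_⟩
    obtain ⟨e1, e2, e3⟩ := h4 x hx
    rw [if_neg (by linarith [hθ k] : ¬ θp k < φ k)] at e1
    exact ⟨e1, e2, e3⟩
end
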